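/- arXiv:math/0410105 — 6 statements merged into one kernel-verified Lean document; each statement's English description precedes it below -/
import Mathlib

section
/- A sequence (X_n) adapted to a filtration (G_n) is G-c.i.d. if and only if for every finite G-stopping time T, X_{T+1} has the same distribution as X_1. -/
open MeasureTheory Filter

section Aux

variable {Ω E : Type*} {mΩ : MeasurableSpace Ω} [MeasurableSpace E]
    {μ : Measure Ω} [IsProbabilityMeasure μ]

lemma integrable_of_bdd {g : Ω → ℝ} (hg : Measurable g) {C : ℝ} (hC : ∀ x, |g x| ≤ C) :
    Integrable g μ :=
  ⟨hg.aestronglyMeasurable,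
    HasFiniteIntegral.of_bounded (C := C) (ae_of_all _ (by simpa [Real.norm_eq_abs] using hC))⟩

/-- measurability of `ω ↦ X (T ω + 1) ω`. -/
lemma meas_comp_stop {X : ℕ → Ω → E} (hX : ∀ n, 1 ≤ n → Measurable (X n))
    {T : Ω → ℕ} (hT : Measurable T) :
    Measurable (fun ω => X (T ω + 1) ω) := by
  have h1 : Measurable (fun p : Ω × ℕ => X (p.2 + 1) p.1) :=
    measurable_from_prod_countable_left (fun n => hX (n + 1) (Nat.le_add_left 1 n))
  exact h1.comp (measurable_id.prodMk hT)

end Aux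

/-- `(X n)` (indexed from 1) is conditionally identically distributed with respect to `𝒢`. -/
def IsCID {Ω E : Type*} {mΩ : MeasurableSpace Ω} [MeasurableSpace E]
    (μ : Measure Ω) (𝒢 : Filtration ℕ mΩ) (X : ℕ → Ω → E) : Prop :=
  ∀ (f : E → ℝ), Measurable f → (∃ C, ∀ x, |f x| ≤ C) →
    ∀ n k : ℕ, n < k →
      μ[(fun ω => f (X k ω)) | 𝒢 n] =ᵐ[μ] μ[(fun ω => f (X (n + 1) ω)) | 𝒢 n]

section Main

variable {Ω E : Type*} {mΩ : MeasurableSpace Ω} [MeasurableSpace E]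
    {μ : Measure Ω} [IsProbabilityMeasure μ] {𝒢 : Filtration ℕ mΩ} {X : ℕ → Ω → E}

lemma stop_meas_eq {T : Ω → ℕ} (hT : IsStoppingTime 𝒢 (fun ω => (T ω : WithTop ℕ))) (n : ℕ) :
    MeasurableSet[𝒢 n] {ω | T ω = n} := by
  simpa using hT.measurableSet_eq n

lemma stop_measurable {T : Ω → ℕ} (hT : IsStoppingTime 𝒢 (fun ω => (T ω : WithTop ℕ))) :
    Measurable T :=
  measurable_to_countable' fun n => 𝒢.le n _ (stop_meas_eq hT n)

lemma fwd_bounded (hadp : ∀ n, 1 ≤ n → Measurable[𝒢 n] (X n)) (h : IsCID μ 𝒢 X)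
    {f : E → ℝ} (hf : Measurable f) {C : ℝ} (hC : ∀ x, |f x| ≤ C)
    {T : Ω → ℕ} (hT : IsStoppingTime 𝒢 (fun ω => (T ω : WithTop ℕ))) {N : ℕ} (hTN : ∀ ω, T ω ≤ N) :
    ∫ ω, f (X (T ω + 1) ω) ∂μ = ∫ ω, f (X 1 ω) ∂μ := by
  have hXm : ∀ n, 1 ≤ n → Measurable (X n) := fun n hn =>
    (hadp n hn).mono (𝒢.le n) le_rfl
  have hfint : ∀ m, 1 ≤ m → Integrable (fun ω => f (X m ω)) μ := fun m hm =>
    integrable_of_bdd (hf.comp (hXm m hm)) (fun ω => hC _)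
  have hg : Measurable (fun ω => X (T ω + 1) ω) := meas_comp_stop hXm (stop_measurable hT)
  have hgint : Integrable (fun ω => f (X (T ω + 1) ω)) μ :=
    integrable_of_bdd (hf.comp hg) (fun ω => hC _)
  have hsm : ∀ n : ℕ, MeasurableSet {ω | T ω = n} := fun n =>
    𝒢.le n _ (stop_meas_eq hT n)
  have hdisj : Set.Pairwise ↑(Finset.range (N + 1))
      (Function.onFun Disjoint fun n => {ω | T ω = n}) := by
    intro a _ b _ hab
    exact Set.disjoint_left.2 fun ω (ha : T ω = a) (hb : T ω = b) => hab (ha ▸ hb ▸ rfl)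
  have hunion : ⋃ n ∈ Finset.range (N + 1), {ω | T ω = n} = Set.univ := by
    ext ω
    simp only [Set.mem_iUnion, Finset.mem_range, Set.mem_univ, iff_true, Set.mem_setOf_eq]
    exact ⟨T ω, Nat.lt_succ_of_le (hTN ω), rfl⟩
  -- split the integral over the partition {T = n}
  have split : ∀ (g : Ω → ℝ), Integrable g μ →
      ∫ ω, g ω ∂μ = ∑ n ∈ Finset.range (N + 1), ∫ ω in {ω | T ω = n}, g ω ∂μ := by
    intro g hgi
    rw [← setIntegral_univ (μ := μ) (f := g), ← hunion]
    exact integral_biUnion_finset _ (fun n _ => hsm n) hdisj (fun n _ => hgi.integrableOn)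
  rw [split _ hgint]
  have hstep : ∀ n ∈ Finset.range (N + 1),
      ∫ ω in {ω | T ω = n}, f (X (T ω + 1) ω) ∂μ
        = ∫ ω in {ω | T ω = n}, f (X (N + 1) ω) ∂μ := by
    intro n _
    have h1 : ∫ ω in {ω | T ω = n}, f (X (T ω + 1) ω) ∂μ
        = ∫ ω in {ω | T ω = n}, f (X (n + 1) ω) ∂μ :=
      setIntegral_congr_fun (hsm n) (fun ω (hω : T ω = n) => by rw [hω])
    rw [h1, ← setIntegral_condExp (𝒢.le n) (hfint (n + 1) (Nat.le_add_left 1 n))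
        (stop_meas_eq hT n),
      ← setIntegral_condExp (𝒢.le n) (hfint (N + 1) (Nat.le_add_left 1 N))
        (stop_meas_eq hT n)]
    have hcx := h f hf ⟨C, hC⟩ n (N + 1) (Finset.mem_range.mp ‹n ∈ Finset.range (N + 1)›)
    exact (setIntegral_congr_ae (hsm n) (hcx.mono fun ω hω _ => hω)).symm
  rw [Finset.sum_congr rfl hstep, ← split _ (hfint (N + 1) (Nat.le_add_left 1 N))]
  have h0 := h f hf ⟨C, hC⟩ 0 (N + 1) (Nat.succ_pos N)
  calc ∫ ω, f (X (N + 1) ω) ∂μ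
      = ∫ ω, (μ[fun ω => f (X (N + 1) ω)| 𝒢 0]) ω ∂μ := (integral_condExp (𝒢.le 0)).symm
    _ = ∫ ω, (μ[fun ω => f (X (0 + 1) ω)| 𝒢 0]) ω ∂μ := integral_congr_ae h0
    _ = ∫ ω, f (X 1 ω) ∂μ := by simpa using integral_condExp (m := 𝒢 0) (𝒢.le 0)


lemma fwd (hadp : ∀ n, 1 ≤ n → Measurable[𝒢 n] (X n)) (h : IsCID μ 𝒢 X)
    {f : E → ℝ} (hf : Measurable f) {C : ℝ} (hC : ∀ x, |f x| ≤ C)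
    {T : Ω → ℕ} (hT : IsStoppingTime 𝒢 (fun ω => (T ω : WithTop ℕ))) :
    ∫ ω, f (X (T ω + 1) ω) ∂μ = ∫ ω, f (X 1 ω) ∂μ := by
  have hXm : ∀ n, 1 ≤ n → Measurable (X n) := fun n hn =>
    (hadp n hn).mono (𝒢.le n) le_rfl
  have key : ∀ N : ℕ, ∫ ω, f (X (min (T ω) N + 1) ω) ∂μ = ∫ ω, f (X 1 ω) ∂μ := fun N =>
    fwd_bounded hadp h hf hC
      ((congrArg (IsStoppingTime 𝒢) (funext fun ω => WithTop.coe_min (T ω) N)).mpr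
        (hT.min_const N)) (fun ω => min_le_right _ _)
  have hmeasN : ∀ N : ℕ, AEStronglyMeasurable (fun ω => f (X (min (T ω) N + 1) ω)) μ := fun N =>
    (hf.comp (meas_comp_stop hXm
      ((stop_measurable hT).min measurable_const))).aestronglyMeasurable
  have hbound : ∀ N : ℕ, ∀ᵐ ω ∂μ, ‖f (X (min (T ω) N + 1) ω)‖ ≤ C :=
    fun N => ae_of_all _ fun ω => by simpa [Real.norm_eq_abs] using hC _
  have hlim : ∀ᵐ ω ∂μ, Tendsto (fun N => f (X (min (T ω) N + 1) ω)) atTop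
      (nhds (f (X (T ω + 1) ω))) := ae_of_all _ fun ω => by
    apply tendsto_atTop_of_eventually_const (i₀ := T ω)
    intro N hN
    rw [min_eq_left hN]
  have hten := tendsto_integral_of_dominated_convergence (fun _ => C) hmeasN
    (integrable_const C) hbound hlim
  simp only [key] at hten
  exact tendsto_nhds_unique hten tendsto_const_nhds


end Main

/-- A sequence `(X n)` adapted to a filtration `𝒢` is `𝒢`-c.i.d. if and only if
`X (T + 1) ∼ X 1` for every finite `𝒢`-stopping time `T` (i.e. `X S ∼ X 1` for every
finite predictable stopping time `S = T + 1`). -/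
theorem stmt1 {Ω E : Type*} {mΩ : MeasurableSpace Ω} [MeasurableSpace E]
    (μ : Measure Ω) [IsProbabilityMeasure μ] (𝒢 : Filtration ℕ mΩ) (X : ℕ → Ω → E)
    (hadp : ∀ n, 1 ≤ n → Measurable[𝒢 n] (X n)) :
    IsCID μ 𝒢 X ↔
      ∀ T : Ω → ℕ, IsStoppingTime 𝒢 (fun ω => (T ω : WithTop ℕ)) →
        Measure.map (fun ω => X (T ω + 1) ω) μ = Measure.map (X 1) μ := by
  classical
  have hXm : ∀ n, 1 ≤ n → Measurable (X n) := fun n hn => (hadp n hn).mono (𝒢.le n) le_rfl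
  constructor
  · intro h T hT
    have hg : Measurable (fun ω => X (T ω + 1) ω) := meas_comp_stop hXm (stop_measurable hT)
    apply Measure.ext
    intro s hs
    rw [Measure.map_apply hg hs, Measure.map_apply (hXm 1 le_rfl) hs]
    have hfm : Measurable (s.indicator (fun _ => (1 : ℝ))) := measurable_const.indicator hs
    have hfb : ∀ x, |s.indicator (fun _ => (1 : ℝ)) x| ≤ 1 := fun x => by
      by_cases hx : x ∈ s <;> simp [Set.indicator_of_mem, Set.indicator_of_notMem, hx]
    have hint := fwd hadp h hfm hfb hT
    have key : ∀ (g : Ω → E), Measurable g →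
        (fun ω => s.indicator (fun _ => (1 : ℝ)) (g ω))
          = (g ⁻¹' s).indicator (fun _ => (1 : ℝ)) := by
      intro g hgm
      ext ω
      by_cases hx : g ω ∈ s <;>
        simp [hx, Set.indicator_of_mem, Set.indicator_of_notMem]
    rw [key _ hg, key _ (hXm 1 le_rfl), integral_indicator_const _ (hg hs),
      integral_indicator_const _ ((hXm 1 le_rfl) hs)] at hint
    simp only [smul_eq_mul, mul_one] at hint
    exact (ENNReal.toReal_eq_toReal_iff' (measure_ne_top μ _) (measure_ne_top μ _)).mp hint
  · rintro hMap f hfm ⟨C, hC⟩ n k hnk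
    have hfint : ∀ m, 1 ≤ m → Integrable (fun ω => f (X m ω)) μ := fun m hm =>
      integrable_of_bdd (hfm.comp (hXm m hm)) (fun ω => hC _)
    have hmapint : ∀ (g : Ω → E), Measurable g → Measure.map g μ = Measure.map (X 1) μ →
        ∫ ω, f (g ω) ∂μ = ∫ ω, f (X 1 ω) ∂μ := by
      intro g hgm hmg
      rw [← integral_map hgm.aemeasurable hfm.aestronglyMeasurable, hmg,
        integral_map (hXm 1 le_rfl).aemeasurable hfm.aestronglyMeasurable]
    have hk1 : 0 < k := lt_of_le_of_lt (Nat.zero_le n) hnk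
    have hk : k - 1 + 1 = k := Nat.succ_pred_eq_of_pos hk1
    have hconst : ∫ ω, f (X k ω) ∂μ = ∫ ω, f (X 1 ω) ∂μ := by
      have hc := hMap (fun _ => k - 1) (isStoppingTime_const 𝒢 (k - 1))
      simp only [hk] at hc
      exact hmapint (X k) (hXm k hk1) hc
    have hset : ∀ A : Set Ω, MeasurableSet[𝒢 n] A →
        ∫ ω in A, f (X (n + 1) ω) ∂μ = ∫ ω in A, f (X k ω) ∂μ := by
      intro A hA
      have hA' : MeasurableSet A := 𝒢.le n _ hA
      set T : Ω → ℕ := fun ω => if ω ∈ A then n else k - 1 with hTdef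
      have hTst : IsStoppingTime 𝒢 (fun ω => (T ω : WithTop ℕ)) := by
        intro m
        show MeasurableSet[𝒢 m] {ω | (T ω : WithTop ℕ) ≤ m}
        rw [show {ω | (T ω : WithTop ℕ) ≤ m} = {ω | T ω ≤ m} by ext ω; simp]
        by_cases h1 : k - 1 ≤ m
        · have hnm : n ≤ m := le_trans (Nat.le_pred_of_lt hnk) h1
          have heq : {ω | T ω ≤ m} = Set.univ := by
            ext ω
            simp only [hTdef, Set.mem_setOf_eq, Set.mem_univ, iff_true]
            split <;> assumption
          rw [heq]
          exact @MeasurableSet.univ Ω (𝒢 m)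
        · by_cases h2 : n ≤ m
          · have heq : {ω | T ω ≤ m} = A := by
              ext ω
              by_cases hω : ω ∈ A <;> simp [hTdef, hω, h1, h2]
            rw [heq]
            exact 𝒢.mono h2 _ hA
          · have heq : {ω | T ω ≤ m} = ∅ := by
              ext ω
              by_cases hω : ω ∈ A <;> simp [hTdef, hω, h1, h2]
            rw [heq]
            exact @MeasurableSet.empty Ω (𝒢 m)
      have hgm : Measurable (fun ω => X (T ω + 1) ω) :=
        meas_comp_stop hXm (stop_measurable hTst)
      have hgint : Integrable (fun ω => f (X (T ω + 1) ω)) μ :=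
        integrable_of_bdd (hfm.comp hgm) (fun _ => hC _)
      have hsplit := integral_add_compl hA' hgint
      have eA : ∫ ω in A, f (X (T ω + 1) ω) ∂μ = ∫ ω in A, f (X (n + 1) ω) ∂μ :=
        setIntegral_congr_fun hA' (fun ω hω => by simp [hTdef, hω])
      have eAc : ∫ ω in Aᶜ, f (X (T ω + 1) ω) ∂μ = ∫ ω in Aᶜ, f (X k ω) ∂μ :=
        setIntegral_congr_fun hA'.compl (fun ω hω => by
          have hω' : ω ∉ A := hω
          simp [hTdef, hω', hk])
      have htot : ∫ ω, f (X (T ω + 1) ω) ∂μ = ∫ ω, f (X k ω) ∂μ := by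
        rw [hmapint _ hgm (hMap T hTst), hconst]
      have hsplitk := integral_add_compl hA' (hfint k hk1)
      have hcomb : ∫ ω in A, f (X (n + 1) ω) ∂μ + ∫ ω in Aᶜ, f (X k ω) ∂μ
          = ∫ ω in A, f (X k ω) ∂μ + ∫ ω in Aᶜ, f (X k ω) ∂μ :=
        calc ∫ ω in A, f (X (n + 1) ω) ∂μ + ∫ ω in Aᶜ, f (X k ω) ∂μ
            = ∫ ω in A, f (X (T ω + 1) ω) ∂μ + ∫ ω in Aᶜ, f (X (T ω + 1) ω) ∂μ := by
              rw [eA, eAc]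
          _ = ∫ ω, f (X (T ω + 1) ω) ∂μ := hsplit
          _ = ∫ ω, f (X k ω) ∂μ := htot
          _ = ∫ ω in A, f (X k ω) ∂μ + ∫ ω in Aᶜ, f (X k ω) ∂μ := hsplitk.symm
      exact add_right_cancel hcomb
    have hcond := ae_eq_condExp_of_forall_setIntegral_eq (μ := μ) (𝒢.le n) (hfint k hk1)
      (fun s _ _ => integrable_condExp.integrableOn)
      (fun s hs _ => by
        rw [setIntegral_condExp (𝒢.le n) (hfint (n + 1) (Nat.le_add_left 1 n)) hs]
        exact hset s hs)
      stronglyMeasurable_condExp.aestronglyMeasurable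
    exact hcond.symm
end

section
/- If (X_n) is c.i.d. with respect to its natural filtration (augmented by the trivial σ-field at time 0) and T is a finite predictable stopping time for this filtration, then the stopped sequence X_n' = X_{T ∧ n} is c.i.d. -/
open MeasureTheory Filter

/-- Condition (5): `(X n)` (indexed from 1) is c.i.d. (with respect to its natural
filtration), i.e. `[X 1, …, X n, X (n+2)] ∼ [X 1, …, X n, X (n+1)]` for all `n ≥ 0`. -/
def IsCIDnat {Ω E : Type*} {mΩ : MeasurableSpace Ω} [MeasurableSpace E]
    (μ : Measure Ω) (X : ℕ → Ω → E) : Prop :=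
  ∀ n : ℕ,
    Measure.map (fun ω (i : Fin (n + 1)) =>
        if (i : ℕ) < n then X ((i : ℕ) + 1) ω else X (n + 2) ω) μ
      = Measure.map (fun ω (i : Fin (n + 1)) => X ((i : ℕ) + 1) ω) μ

/-- If `(X n)` is c.i.d. and `T = S + 1` is a finite predictable stopping time for the
natural filtration of `(X n)`, then the stopped sequence `(X (T ∧ n))` is c.i.d. -/
theorem stmt3 {Ω E : Type*} {mΩ : MeasurableSpace Ω} [MeasurableSpace E]
    (μ : Measure Ω) [IsProbabilityMeasure μ] (X : ℕ → Ω → E)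
    (hX : ∀ n, Measurable (X n))
    (hcid : IsCIDnat μ X)
    (𝒢 : Filtration ℕ mΩ)
    (h𝒢 : ∀ n, 𝒢 n = ⨆ i ∈ Set.Icc 1 n, MeasurableSpace.comap (X i) inferInstance)
    (S : Ω → ℕ) (hS : IsStoppingTime 𝒢 (fun ω => (S ω : WithTop ℕ))) :
    IsCIDnat μ (fun n ω => X (min (S ω + 1) n) ω) := by
  intro n
  -- the stopped sequence
  set Y : ℕ → Ω → E := fun k ω => X (min (S ω + 1) k) ω with hYdef
  -- measurability of S
  have hSm : Measurable S := by
    refine measurable_to_countable' fun k => ?_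
    convert 𝒢.le k _ (hS.measurableSet_eq k) using 1
    ext ω; simp
  have hYm : ∀ k, Measurable (Y k) := by
    intro k
    have hg : Measurable fun p : Ω × ℕ => X p.2 p.1 :=
      measurable_from_prod_countable_left fun j => hX j
    exact hg.comp (measurable_id.prodMk ((hSm.add_const 1).min measurable_const))
  -- the four vector-valued maps
  set V : Ω → Fin (n + 1) → E := fun ω i => X ((i : ℕ) + 1) ω with hVdef
  set W : Ω → Fin (n + 1) → E :=
    fun ω i => if (i : ℕ) < n then X ((i : ℕ) + 1) ω else X (n + 2) ω with hWdef
  set V' : Ω → Fin (n + 1) → E := fun ω i => Y ((i : ℕ) + 1) ω with hV'def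
  set W' : Ω → Fin (n + 1) → E :=
    fun ω i => if (i : ℕ) < n then Y ((i : ℕ) + 1) ω else Y (n + 2) ω with hW'def
  have hVm : Measurable V := measurable_pi_lambda _ fun i => hX _
  have hWm : Measurable W := measurable_pi_lambda _ fun i => by
    by_cases hi : (i : ℕ) < n <;> simp only [hWdef, hi, if_true, if_false] <;> exact hX _
  have hV'm : Measurable V' := measurable_pi_lambda _ fun i => hYm _
  have hW'm : Measurable W' := measurable_pi_lambda _ fun i => by
    by_cases hi : (i : ℕ) < n <;> simp only [hW'def, hi, if_true, if_false] <;> exact hYm _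
  -- the event A = {S ≤ n}
  set A : Set Ω := {ω | S ω ≤ n} with hAdef
  have hA𝒢 : MeasurableSet[𝒢 n] A := by
    convert hS n using 1
    ext ω; simp [hAdef]
  have hAm : MeasurableSet A := 𝒢.le n _ hA𝒢
  -- the prefix map
  set J : Ω → Fin n → E := fun ω j => X ((j : ℕ) + 1) ω with hJdef
  have hle : 𝒢 n ≤ MeasurableSpace.comap J MeasurableSpace.pi := by
    rw [h𝒢 n]
    refine iSup₂_le fun i hi => ?_
    obtain ⟨hi1, hin⟩ := hi
    have hXi : X i = (fun f : Fin n → E => f ⟨i - 1, by omega⟩) ∘ J := by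
      funext ω
      simp only [Function.comp_apply, hJdef]
      congr 1
      omega
    rw [hXi, ← MeasurableSpace.comap_comp]
    exact MeasurableSpace.comap_mono (measurable_pi_apply _).comap_le
  obtain ⟨C, hC, hJC⟩ : ∃ C, MeasurableSet C ∧ J ⁻¹' C = A :=
    MeasurableSpace.measurableSet_comap.1 (hle _ hA𝒢)
  -- the corresponding set in `Fin (n+1) → E`
  set r : (Fin (n + 1) → E) → Fin n → E := fun x j => x j.castSucc with hrdef
  have hrm : Measurable r := measurable_pi_lambda _ fun j => measurable_pi_apply _
  set D : Set (Fin (n + 1) → E) := r ⁻¹' C with hDdef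
  have hDm : MeasurableSet D := hrm hC
  have hrW : r ∘ W = J := by
    funext ω j
    simp only [Function.comp_apply, hrdef, hWdef, hJdef, Fin.coe_castSucc]
    rw [if_pos j.isLt]
  have hrV : r ∘ V = J := by
    funext ω j
    simp only [Function.comp_apply, hrdef, hVdef, hJdef, Fin.coe_castSucc]
  have hWD : W ⁻¹' Dᶜ = Aᶜ := by
    rw [hDdef, ← Set.preimage_compl, ← Set.preimage_comp, hrW, Set.preimage_compl, hJC]
  have hVD : V ⁻¹' Dᶜ = Aᶜ := by
    rw [hDdef, ← Set.preimage_compl, ← Set.preimage_comp, hrV, Set.preimage_compl, hJC]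
  -- split the measure
  have hsplit : ∀ (f : Ω → Fin (n + 1) → E), Measurable f →
      Measure.map f μ = Measure.map f (μ.restrict A) + Measure.map f (μ.restrict Aᶜ) := by
    intro f hf
    rw [← Measure.map_add _ _ hf, Measure.restrict_add_restrict_compl hAm]
  -- on A the two stopped vectors agree
  have h1 : Measure.map W' (μ.restrict A) = Measure.map V' (μ.restrict A) := by
    refine Measure.map_congr (ae_restrict_of_forall_mem hAm fun ω hω => ?_)
    funext i
    simp only [hW'def, hV'def, hYdef]
    by_cases hi : (i : ℕ) < n
    · rw [if_pos hi]
    · rw [if_neg hi]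
      have hSn : S ω ≤ n := hω
      congr 1
      omega
  -- on Aᶜ the stopped vectors agree with the unstopped ones
  have h2 : Measure.map W' (μ.restrict Aᶜ) = Measure.map W (μ.restrict Aᶜ) := by
    refine Measure.map_congr (ae_restrict_of_forall_mem hAm.compl fun ω hω => ?_)
    have hSn : ¬ S ω ≤ n := hω
    funext i
    have hin : (i : ℕ) ≤ n := Nat.lt_succ_iff.1 i.isLt
    simp only [hW'def, hWdef, hYdef]
    by_cases hi : (i : ℕ) < n
    · rw [if_pos hi, if_pos hi]
      congr 1
      omega
    · rw [if_neg hi, if_neg hi]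
      congr 1
      omega
  have h3 : Measure.map V' (μ.restrict Aᶜ) = Measure.map V (μ.restrict Aᶜ) := by
    refine Measure.map_congr (ae_restrict_of_forall_mem hAm.compl fun ω hω => ?_)
    have hSn : ¬ S ω ≤ n := hω
    funext i
    have hin : (i : ℕ) ≤ n := Nat.lt_succ_iff.1 i.isLt
    simp only [hV'def, hVdef, hYdef]
    congr 1
    omega
  -- on Aᶜ apply the c.i.d. hypothesis
  have h4 : Measure.map W (μ.restrict Aᶜ) = Measure.map V (μ.restrict Aᶜ) := by
    have e1 : Measure.map W (μ.restrict Aᶜ) = (Measure.map W μ).restrict Dᶜ := by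
      rw [← hWD, ← Measure.restrict_map hWm hDm.compl]
    have e2 : Measure.map V (μ.restrict Aᶜ) = (Measure.map V μ).restrict Dᶜ := by
      rw [← hVD, ← Measure.restrict_map hVm hDm.compl]
    have hc := hcid n
    rw [← hWdef, ← hVdef] at hc
    rw [e1, e2, hc]
  show Measure.map W' μ = Measure.map V' μ
  rw [hsplit W' hW'm, hsplit V' hV'm, h1, h2, h3, h4]
end

section
/- In the modified Pólya urn with reinforcements (d_n) such that d_n is independent of σ(X_i, d_j : i ≤ n, j < n) for all n, the sequence of indicator variables (X_n) is c.i.d. That is, the predictive probabilities E[X_{n+1} | G_n] = (w + Σ_{i≤n} d_i X_i)/(w + r + Σ_{i≤n} d_i) form a martingale with respect to G_n = σ(X_1, d_1, ..., X_n, d_n, d_{n+1}), G_0 trivial. -/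
open MeasureTheory ProbabilityTheory Filter

lemma polya_sup_eq_generateFrom {Ω : Type*} (m₁ m₂ : MeasurableSpace Ω) :
    m₁ ⊔ m₂ = MeasurableSpace.generateFrom
      {s | ∃ A, MeasurableSet[m₁] A ∧ ∃ B, MeasurableSet[m₂] B ∧ s = A ∩ B} := by
  apply le_antisymm
  · refine sup_le (fun s hs => ?_) (fun s hs => ?_)
    · exact MeasurableSpace.measurableSet_generateFrom
        ⟨s, hs, Set.univ, MeasurableSet.univ, (Set.inter_univ s).symm⟩
    · exact MeasurableSpace.measurableSet_generateFrom
        ⟨Set.univ, MeasurableSet.univ, s, hs, (Set.univ_inter s).symm⟩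
  · refine MeasurableSpace.generateFrom_le ?_
    rintro t ⟨A, hA, B, hB, rfl⟩
    exact ((le_sup_left : m₁ ≤ m₁ ⊔ m₂) A hA).inter ((le_sup_right : m₂ ≤ m₁ ⊔ m₂) B hB)

lemma polya_isPiSystem {Ω : Type*} (m₁ m₂ : MeasurableSpace Ω) :
    IsPiSystem {s | ∃ A, MeasurableSet[m₁] A ∧ ∃ B, MeasurableSet[m₂] B ∧ s = A ∩ B} := by
  rintro _ ⟨A, hA, B, hB, rfl⟩ _ ⟨A', hA', B', hB', rfl⟩ -
  exact ⟨A ∩ A', hA.inter hA', B ∩ B', hB.inter hB',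
    by ext x; simp [Set.mem_inter_iff]; tauto⟩

lemma condexp_sup_of_indep {Ω : Type*} {m₁ m₂ : MeasurableSpace Ω} {mΩ : MeasurableSpace Ω}
    (μ : Measure Ω) [IsProbabilityMeasure μ] (hm₁ : m₁ ≤ mΩ) (hm₂ : m₂ ≤ mΩ)
    {f : Ω → ℝ} (hfm : Measurable[mΩ] f) (hbd : ∀ ω, ‖f ω‖ ≤ 1)
    (hindep : Indep (m₁ ⊔ MeasurableSpace.comap f inferInstance) m₂ μ) :
    μ[f | m₁ ⊔ m₂] =ᵐ[μ] μ[f | m₁] := by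
  have hm : m₁ ⊔ m₂ ≤ mΩ := sup_le hm₁ hm₂
  have hfi : Integrable f μ :=
    ⟨(hfm.aestronglyMeasurable : AEStronglyMeasurable f μ),
      HasFiniteIntegral.of_bounded (C := 1) (Eventually.of_forall hbd)⟩
  set g := μ[f|m₁] with hg
  have hgi : Integrable g μ := integrable_condExp
  have hgm₁ : StronglyMeasurable[m₁] g := stronglyMeasurable_condExp
  have hindep₁ : Indep m₁ m₂ μ := indep_of_indep_of_le_left hindep le_sup_left
  have hkey : ∀ ⦃t⦄, MeasurableSet[m₁ ⊔ m₂] t → ∫ x in t, g x ∂μ = ∫ x in t, f x ∂μ := by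
    refine MeasurableSpace.induction_on_inter (m := m₁ ⊔ m₂)
      (C := fun t _ => ∫ x in t, g x ∂μ = ∫ x in t, f x ∂μ)
      (polya_sup_eq_generateFrom m₁ m₂) (polya_isPiSystem m₁ m₂) (by simp) ?_ ?_ ?_
    · rintro _ ⟨A, hA, B, hB, rfl⟩
      have hA' : MeasurableSet[mΩ] A := hm₁ _ hA
      have hB' : MeasurableSet[mΩ] B := hm₂ _ hB
      have hifA : Integrable (A.indicator f) μ := hfi.indicator hA'
      have higA : Integrable (A.indicator g) μ := hgi.indicator hA'
      have hiB : Integrable (B.indicator (fun _ => (1 : ℝ))) μ := (integrable_const 1).indicator hB'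
      have hprod : ∀ h : Ω → ℝ,
          (A ∩ B).indicator h = A.indicator h * B.indicator (fun _ => (1 : ℝ)) := by
        intro h; funext ω
        by_cases hωA : ω ∈ A <;> by_cases hωB : ω ∈ B <;>
          simp [Set.indicator_apply, hωA, hωB]
      have hindf : IndepFun (A.indicator f) (B.indicator (fun _ => (1 : ℝ))) μ := by
        have h1 : Measurable[m₁ ⊔ MeasurableSpace.comap f inferInstance] (A.indicator f) :=
          (Measurable.of_comap_le le_sup_right).indicator ((le_sup_left :
            m₁ ≤ m₁ ⊔ MeasurableSpace.comap f inferInstance) A hA)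
        have h2 : Measurable[m₂] (B.indicator (fun _ => (1 : ℝ))) :=
          measurable_const.indicator hB
        exact indep_of_indep_of_le_right (indep_of_indep_of_le_left hindep h1.comap_le) h2.comap_le
      have hindg : IndepFun (A.indicator g) (B.indicator (fun _ => (1 : ℝ))) μ := by
        have h1 : Measurable[m₁] (A.indicator g) := hgm₁.measurable.indicator hA
        have h2 : Measurable[m₂] (B.indicator (fun _ => (1 : ℝ))) :=
          measurable_const.indicator hB
        exact indep_of_indep_of_le_right (indep_of_indep_of_le_left hindep₁ h1.comap_le)
          h2.comap_le
      have hAg : ∫ x in A, g x ∂μ = ∫ x in A, f x ∂μ := setIntegral_condExp hm₁ hfi hA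
      rw [← integral_indicator (hA'.inter hB'), ← integral_indicator (hA'.inter hB'),
        hprod g, hprod f, hindg.integral_mul_eq_mul_integral higA.1 hiB.1,
        hindf.integral_mul_eq_mul_integral hifA.1 hiB.1, integral_indicator hA', integral_indicator hA',
        hAg]
    · intro t ht hteq
      have ht' : MeasurableSet[mΩ] t := hm _ ht
      have h1 := integral_add_compl ht' hgi
      have h2 := integral_add_compl ht' hfi
      have h3 : ∫ x, g x ∂μ = ∫ x, f x ∂μ := integral_condExp hm₁
      linarith
    · intro s hdisj hmeas heq
      have hs' : ∀ i, MeasurableSet[mΩ] (s i) := fun i => hm _ (hmeas i)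
      rw [integral_iUnion hs' hdisj hgi.integrableOn,
        integral_iUnion hs' hdisj hfi.integrableOn]
      exact tsum_congr heq
  exact (ae_eq_condExp_of_forall_setIntegral_eq hm hfi
    (fun s _ _ => hgi.integrableOn) (fun s hs _ => hkey hs)
    ((hgm₁.mono (le_sup_left : m₁ ≤ m₁ ⊔ m₂)).aestronglyMeasurable (μ := μ))).symm


/-- Modified Pólya urn: `w > 0` white and `r > 0` red balls; at time `n` a ball is drawn
and replaced together with `d n ≥ 1` balls of the same colour, `X n` being the indicator
of a white draw. If each `d n` is independent of `σ(X i, d j : i ≤ n, j < n)`, then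
`(X n)` is c.i.d.: the predictive probabilities
`M n = (w + ∑_{i ≤ n} d i * X i) / (w + r + ∑_{i ≤ n} d i)` form a martingale with respect
to `𝒢 n = σ(X 1, d 1, …, X n, d n, d (n+1))`, `𝒢 0` trivial. -/
theorem stmt6 {Ω : Type*} {mΩ : MeasurableSpace Ω}
    (μ : Measure Ω) [IsProbabilityMeasure μ]
    (w r : ℝ) (hw : 0 < w) (hr : 0 < r)
    (X : ℕ → Ω → ℝ) (d : ℕ → Ω → ℕ)
    (hX : ∀ n, Measurable (X n)) (hd : ∀ n, Measurable (d n))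
    (hind : ∀ n, 1 ≤ n → ∀ ω, X n ω = 0 ∨ X n ω = 1)
    (hd1 : ∀ n, 1 ≤ n → ∀ ω, 1 ≤ d n ω)
    -- `ℱ n = σ(X 1, d 1, …, X n, d n)`
    (ℱ : ℕ → MeasurableSpace Ω)
    (hℱ : ∀ n, ℱ n = (⨆ i ∈ Set.Icc 1 n, MeasurableSpace.comap (X i) inferInstance) ⊔
        (⨆ j ∈ Set.Icc 1 n, MeasurableSpace.comap (d j) inferInstance))
    -- (i): `d n` is independent of `σ(X i, d j : i ≤ n, j < n)`
    (hindep : ∀ n, 1 ≤ n → Indep (MeasurableSpace.comap (d n) inferInstance)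
        ((⨆ i ∈ Set.Icc 1 n, MeasurableSpace.comap (X i) inferInstance) ⊔
          (⨆ j ∈ Set.Icc 1 (n - 1), MeasurableSpace.comap (d j) inferInstance)) μ)
    -- `P(X 1 = 1) = w / (w + r)`
    (hinit : μ {ω | X 1 ω = 1} = ENNReal.ofReal (w / (w + r)))
    -- predictive probabilities of the urn scheme
    (hpred : ∀ n, 1 ≤ n →
      μ[X (n + 1) | ℱ n] =ᵐ[μ]
        fun ω => (w + ∑ i ∈ Finset.Icc 1 n, (d i ω : ℝ) * X i ω) /
          (w + r + ∑ i ∈ Finset.Icc 1 n, (d i ω : ℝ)))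
    (𝒢 : Filtration ℕ mΩ)
    (h𝒢0 : 𝒢 0 = (⊥ : MeasurableSpace Ω))
    (h𝒢 : ∀ n, 1 ≤ n → 𝒢 n =
        (⨆ i ∈ Set.Icc 1 n, MeasurableSpace.comap (X i) inferInstance) ⊔
        (⨆ j ∈ Set.Icc 1 (n + 1), MeasurableSpace.comap (d j) inferInstance)) :
    Martingale (fun n ω => (w + ∑ i ∈ Finset.Icc 1 n, (d i ω : ℝ) * X i ω) /
        (w + r + ∑ i ∈ Finset.Icc 1 n, (d i ω : ℝ))) 𝒢 μ := by
  have hXb : ∀ i, 1 ≤ i → ∀ ω, 0 ≤ X i ω ∧ X i ω ≤ 1 := by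
    intro i hi ω; rcases hind i hi ω with h | h <;> simp [h]
  set M : ℕ → Ω → ℝ := fun n ω => (w + ∑ i ∈ Finset.Icc 1 n, (d i ω : ℝ) * X i ω) /
      (w + r + ∑ i ∈ Finset.Icc 1 n, (d i ω : ℝ)) with hM
  have hwr : 0 < w + r := by linarith
  have hT0 : ∀ n ω, 0 ≤ ∑ i ∈ Finset.Icc 1 n, (d i ω : ℝ) := fun n ω =>
    Finset.sum_nonneg fun i _ => by positivity
  have hS0 : ∀ n ω, 0 ≤ ∑ i ∈ Finset.Icc 1 n, (d i ω : ℝ) * X i ω := fun n ω =>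
    Finset.sum_nonneg fun i hi =>
      mul_nonneg (by positivity) ((hXb i (Finset.mem_Icc.mp hi).1 ω).1)
  have hST : ∀ n ω, (∑ i ∈ Finset.Icc 1 n, (d i ω : ℝ) * X i ω) ≤
      ∑ i ∈ Finset.Icc 1 n, (d i ω : ℝ) := fun n ω =>
    Finset.sum_le_sum fun i hi =>
      mul_le_of_le_one_right (by positivity) ((hXb i (Finset.mem_Icc.mp hi).1 ω).2)
  have hden : ∀ n ω, 0 < w + r + ∑ i ∈ Finset.Icc 1 n, (d i ω : ℝ) := fun n ω => by
    have := hT0 n ω; linarith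
  have hM0 : ∀ n ω, 0 ≤ M n ω := fun n ω =>
    div_nonneg (by have := hS0 n ω; linarith) (hden n ω).le
  have hM1 : ∀ n ω, M n ω ≤ 1 := fun n ω =>
    (div_le_one (hden n ω)).mpr (by have := hST n ω; linarith)
  have hMbd : ∀ n ω, ‖M n ω‖ ≤ 1 := fun n ω =>
    abs_le.mpr ⟨by linarith [hM0 n ω], hM1 n ω⟩
  have hdR : ∀ j, Measurable (fun ω => (d j ω : ℝ)) := fun j =>
    (measurable_from_top (f := fun m : ℕ => (m : ℝ))).comp (hd j)
  have hMmeas : ∀ n, Measurable (M n) := fun n =>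
    (measurable_const.add (Finset.measurable_sum _ fun i _ => (hdR i).mul (hX i))).div
      (measurable_const.add (Finset.measurable_sum _ fun i _ => hdR i))
  have hMint : ∀ n, Integrable (M n) μ := fun n =>
    ⟨(hMmeas n).aestronglyMeasurable,
      HasFiniteIntegral.of_bounded (C := 1) (Eventually.of_forall (hMbd n))⟩
  have hFle : ∀ n, ℱ n ≤ mΩ := fun n => by
    rw [hℱ n]
    exact sup_le (iSup₂_le fun i _ => (hX i).comap_le) (iSup₂_le fun j _ => (hd j).comap_le)
  have hXG : ∀ n i, i ∈ Set.Icc 1 n → Measurable[𝒢 n] (X i) := by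
    intro n i hi
    have hn : 1 ≤ n := le_trans hi.1 hi.2
    refine Measurable.of_comap_le ?_
    rw [h𝒢 n hn]
    exact le_trans (le_biSup (fun i => MeasurableSpace.comap (X i) inferInstance) hi) le_sup_left
  have hdG : ∀ n, 1 ≤ n → ∀ j, j ∈ Set.Icc 1 (n + 1) →
      Measurable[𝒢 n] (fun ω => (d j ω : ℝ)) := by
    intro n hn j hj
    have h1 : Measurable[𝒢 n] (d j) := by
      refine Measurable.of_comap_le ?_
      rw [h𝒢 n hn]
      exact le_trans (le_biSup (fun j => MeasurableSpace.comap (d j) inferInstance) hj)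
        le_sup_right
    exact (measurable_from_top (f := fun m : ℕ => (m : ℝ))).comp h1
  have hadp : StronglyAdapted 𝒢 M := by
    intro n
    rcases Nat.eq_zero_or_pos n with rfl | hn
    · have : M 0 = fun _ => w / (w + r) := by
        funext ω; simp [hM]
      rw [this]; exact stronglyMeasurable_const
    · refine Measurable.stronglyMeasurable (Measurable.div ?_ ?_)
      · refine measurable_const.add (Finset.measurable_sum _ fun i hi => ?_)
        have hi' := Finset.mem_Icc.mp hi
        exact (hdG n hn i (Set.mem_Icc.mpr ⟨hi'.1, by omega⟩)).mul
          (hXG n i (Set.mem_Icc.mpr hi'))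
      · refine measurable_const.add (Finset.measurable_sum _ fun i hi => ?_)
        have hi' := Finset.mem_Icc.mp hi
        exact hdG n hn i (Set.mem_Icc.mpr ⟨hi'.1, by omega⟩)
  -- conditional expectation of X (n+1) given 𝒢 n
  have hGeq : ∀ n, 1 ≤ n → (𝒢 n : MeasurableSpace Ω) =
      ℱ n ⊔ MeasurableSpace.comap (d (n + 1)) inferInstance := by
    intro n hn
    rw [h𝒢 n hn, hℱ n]
    have hIcc : Set.Icc 1 (n + 1) = insert (n + 1) (Set.Icc 1 n) := by
      ext j; simp [Set.mem_Icc]; omega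
    rw [hIcc, iSup_insert, sup_comm (MeasurableSpace.comap (d (n + 1)) inferInstance) _,
      ← sup_assoc]
  have hcondX : ∀ n, 1 ≤ n → μ[X (n + 1) | 𝒢 n] =ᵐ[μ] M n := by
    intro n hn
    have h1 : μ[X (n + 1) | ℱ n ⊔ MeasurableSpace.comap (d (n + 1)) inferInstance] =ᵐ[μ]
        μ[X (n + 1) | ℱ n] := by
      refine condexp_sup_of_indep μ (hFle n) (hd (n + 1)).comap_le (hX (n + 1))
        (fun ω => ?_) ?_
      · rcases hind (n + 1) (by omega) ω with h | h <;> simp [h]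
      · have h2 := (hindep (n + 1) (by omega)).symm
        simp only [Nat.add_sub_cancel] at h2
        refine indep_of_indep_of_le_left h2 ?_
        rw [hℱ n]
        refine sup_le (sup_le ?_ le_sup_right) ?_
        · refine le_trans (biSup_mono fun i hi => ?_) le_sup_left
          rcases Set.mem_Icc.mp hi with ⟨h1, h2⟩
          exact Set.mem_Icc.mpr ⟨h1, by omega⟩
        · exact le_trans (le_biSup (fun i => MeasurableSpace.comap (X i) inferInstance)
            (Set.mem_Icc.mpr ⟨by omega, le_rfl⟩)) le_sup_left
    rw [hGeq n hn]
    exact h1.trans (hpred n hn)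
  refine martingale_nat hadp hMint ?_
  intro n
  rcases Nat.eq_zero_or_pos n with rfl | hn
  · -- base case
    rw [h𝒢0, condExp_bot]
    have hk0 : ∀ ω, (0 : ℝ) ≤ (d 1 ω : ℝ) := fun ω => by positivity
    have hD : ∀ ω, 0 < w + r + (d 1 ω : ℝ) := fun ω => by have := hk0 ω; linarith
    set φ : Ω → ℝ := fun ω => w / (w + r + (d 1 ω : ℝ)) with hφ
    set ψ : Ω → ℝ := fun ω => (d 1 ω : ℝ) / (w + r + (d 1 ω : ℝ)) with hψ
    have he : M 1 = φ + ψ * X 1 := by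
      funext ω
      simp only [hM, hφ, hψ, Pi.add_apply, Pi.mul_apply, Finset.Icc_self,
        Finset.sum_singleton]
      have := hD ω
      field_simp
    have hφm : Measurable φ := measurable_const.div (measurable_const.add (hdR 1))
    have hψm : Measurable ψ := (hdR 1).div (measurable_const.add (hdR 1))
    have hφbd : ∀ ω, ‖φ ω‖ ≤ 1 := fun ω => abs_le.mpr
      ⟨by have := hD ω; nlinarith [div_nonneg hw.le (hD ω).le],
        (div_le_one (hD ω)).mpr (by have := hk0 ω; linarith)⟩
    have hψbd : ∀ ω, ‖ψ ω‖ ≤ 1 := fun ω => abs_le.mpr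
      ⟨by nlinarith [div_nonneg (hk0 ω) (hD ω).le],
        (div_le_one (hD ω)).mpr (by linarith)⟩
    have hiφ : Integrable φ μ := ⟨hφm.aestronglyMeasurable,
      HasFiniteIntegral.of_bounded (C := 1) (Eventually.of_forall hφbd)⟩
    have hiψ : Integrable ψ μ := ⟨hψm.aestronglyMeasurable,
      HasFiniteIntegral.of_bounded (C := 1) (Eventually.of_forall hψbd)⟩
    have hiX1 : Integrable (X 1) μ := ⟨(hX 1).aestronglyMeasurable,
      HasFiniteIntegral.of_bounded (C := 1) (Eventually.of_forall fun ω => by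
        rcases hind 1 le_rfl ω with h | h <;> simp [h])⟩
    have hiψX : Integrable (ψ * X 1) μ := ⟨(hψm.mul (hX 1)).aestronglyMeasurable,
      HasFiniteIntegral.of_bounded (C := 1) (Eventually.of_forall fun ω => by
        have h1 := hψbd ω
        have h2 : ‖X 1 ω‖ ≤ 1 := by rcases hind 1 le_rfl ω with h | h <;> simp [h]
        calc ‖(ψ * X 1) ω‖ = ‖ψ ω‖ * ‖X 1 ω‖ := norm_mul _ _
        _ ≤ 1 := mul_le_one₀ h1 (norm_nonneg _) h2)⟩
    have hindep1 : IndepFun ψ (X 1) μ := by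
      have hψm' : Measurable[MeasurableSpace.comap (d 1) inferInstance] ψ := by
        have h1 : Measurable[MeasurableSpace.comap (d 1) inferInstance] (d 1) :=
          Measurable.of_comap_le le_rfl
        exact (measurable_from_top (f := fun m : ℕ => (m : ℝ) / (w + r + (m : ℝ)))).comp h1
      have hX1le : MeasurableSpace.comap (X 1) inferInstance ≤
          (⨆ i ∈ Set.Icc 1 1, MeasurableSpace.comap (X i) inferInstance) ⊔
          (⨆ j ∈ Set.Icc 1 0, MeasurableSpace.comap (d j) inferInstance) :=
        le_trans (le_biSup (fun i => MeasurableSpace.comap (X i) inferInstance)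
          (Set.mem_Icc.mpr ⟨le_rfl, le_rfl⟩)) le_sup_left
      exact indep_of_indep_of_le_right
        (indep_of_indep_of_le_left (hindep 1 le_rfl) hψm'.comap_le) hX1le
    have hEX1 : ∫ x, X 1 x ∂μ = w / (w + r) := by
      have hXind : X 1 = Set.indicator {ω | X 1 ω = 1} (fun _ => (1 : ℝ)) := by
        funext ω
        rcases hind 1 le_rfl ω with h | h <;>
          simp [Set.indicator_apply, h, Set.mem_setOf_eq]
      have hset : MeasurableSet {ω | X 1 ω = 1} := hX 1 (measurableSet_singleton 1)
      rw [hXind]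
      rw [show Set.indicator {ω | X 1 ω = 1} (fun _ => (1 : ℝ)) =
        Set.indicator {ω | X 1 ω = 1} 1 from rfl]
      rw [integral_indicator_one hset, measureReal_def, hinit, ENNReal.toReal_ofReal (by positivity)]
    have hmul : ∫ x, (ψ * X 1) x ∂μ = (∫ x, ψ x ∂μ) * (w / (w + r)) := by
      have h := hindep1.integral_mul_eq_mul_integral hiψ.1 hiX1.1
      rw [hEX1] at h
      exact h
    have hint1 : ∫ x, M 1 x ∂μ = w / (w + r) := by
      rw [he]
      simp only [Pi.add_apply]
      rw [integral_add hiφ hiψX, hmul, ← integral_mul_const,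
        ← integral_add hiφ (hiψ.mul_const _)]
      have h3 : (fun a => φ a + ψ a * (w / (w + r))) = fun _ => w / (w + r) := by
        funext ω
        simp only [hφ, hψ]
        have := hD ω
        field_simp
      rw [h3, integral_const, measureReal_def, measure_univ, ENNReal.toReal_one, one_smul]
    rw [hint1]
    refine Eventually.of_forall fun ω => ?_
    simp [hM]
  · -- inductive case n ≥ 1
    have hk0 : ∀ ω, (0 : ℝ) ≤ (d (n + 1) ω : ℝ) := fun ω => by positivity
    have hDk : ∀ ω, 0 < w + r + (∑ i ∈ Finset.Icc 1 n, (d i ω : ℝ)) + (d (n + 1) ω : ℝ) :=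
      fun ω => by have := hT0 n ω; have := hk0 ω; linarith
    set A : Ω → ℝ := fun ω => (w + ∑ i ∈ Finset.Icc 1 n, (d i ω : ℝ) * X i ω) /
        (w + r + (∑ i ∈ Finset.Icc 1 n, (d i ω : ℝ)) + (d (n + 1) ω : ℝ)) with hA
    set B : Ω → ℝ := fun ω => (d (n + 1) ω : ℝ) /
        (w + r + (∑ i ∈ Finset.Icc 1 n, (d i ω : ℝ)) + (d (n + 1) ω : ℝ)) with hB
    have he : M (n + 1) = A + B * X (n + 1) := by
      funext ω
      simp only [hM, hA, hB, Pi.add_apply, Pi.mul_apply]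
      rw [Finset.sum_Icc_succ_top (by omega : 1 ≤ n + 1),
        Finset.sum_Icc_succ_top (by omega : 1 ≤ n + 1)]
      have := hDk ω
      field_simp
      ring
    have hAg : StronglyMeasurable[𝒢 n] A := by
      refine Measurable.stronglyMeasurable (Measurable.div ?_ ?_)
      · refine measurable_const.add (Finset.measurable_sum _ fun i hi => ?_)
        have hi' := Finset.mem_Icc.mp hi
        exact (hdG n hn i (Set.mem_Icc.mpr ⟨hi'.1, by omega⟩)).mul
          (hXG n i (Set.mem_Icc.mpr hi'))
      · refine (Measurable.add (measurable_const.add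
          (Finset.measurable_sum _ fun i hi => ?_)) ?_)
        · have hi' := Finset.mem_Icc.mp hi
          exact hdG n hn i (Set.mem_Icc.mpr ⟨hi'.1, by omega⟩)
        · exact hdG n hn (n + 1) (Set.mem_Icc.mpr ⟨by omega, le_rfl⟩)
    have hBg : StronglyMeasurable[𝒢 n] B := by
      refine Measurable.stronglyMeasurable (Measurable.div ?_ ?_)
      · exact hdG n hn (n + 1) (Set.mem_Icc.mpr ⟨by omega, le_rfl⟩)
      · refine (Measurable.add (measurable_const.add
          (Finset.measurable_sum _ fun i hi => ?_)) ?_)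
        · have hi' := Finset.mem_Icc.mp hi
          exact hdG n hn i (Set.mem_Icc.mpr ⟨hi'.1, by omega⟩)
        · exact hdG n hn (n + 1) (Set.mem_Icc.mpr ⟨by omega, le_rfl⟩)
    have hAbd : ∀ ω, ‖A ω‖ ≤ 1 := fun ω => by
      have h1 := hS0 n ω; have h2 := hST n ω; have h3 := hDk ω; have h4 := hk0 ω
      have h5 : 0 ≤ A ω := div_nonneg (by linarith) h3.le
      have h6 : A ω ≤ 1 := (div_le_one h3).mpr (by linarith)
      exact abs_le.mpr ⟨by linarith, h6⟩
    have hBbd : ∀ ω, ‖B ω‖ ≤ 1 := fun ω => by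
      have h3 := hDk ω; have h4 := hk0 ω; have h1 := hT0 n ω
      have h5 : 0 ≤ B ω := div_nonneg h4 h3.le
      have h6 : B ω ≤ 1 := (div_le_one h3).mpr (by linarith)
      exact abs_le.mpr ⟨by linarith, h6⟩
    have hAm : Measurable A := (hAg.measurable).mono (𝒢.le n) le_rfl
    have hBm : Measurable B := (hBg.measurable).mono (𝒢.le n) le_rfl
    have hiA : Integrable A μ := ⟨hAm.aestronglyMeasurable,
      HasFiniteIntegral.of_bounded (C := 1) (Eventually.of_forall hAbd)⟩
    have hXbd : ∀ ω, ‖X (n + 1) ω‖ ≤ 1 := fun ω => by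
      rcases hind (n + 1) (by omega) ω with h | h <;> simp [h]
    have hiX : Integrable (X (n + 1)) μ := ⟨(hX (n + 1)).aestronglyMeasurable,
      HasFiniteIntegral.of_bounded (C := 1) (Eventually.of_forall hXbd)⟩
    have hiBX : Integrable (B * X (n + 1)) μ := ⟨(hBm.mul (hX (n + 1))).aestronglyMeasurable,
      HasFiniteIntegral.of_bounded (C := 1) (Eventually.of_forall fun ω => by
        calc ‖(B * X (n + 1)) ω‖ = ‖B ω‖ * ‖X (n + 1) ω‖ := norm_mul _ _
        _ ≤ 1 := mul_le_one₀ (hBbd ω) (norm_nonneg _) (hXbd ω))⟩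
    have hstep1 : μ[M (n + 1) | 𝒢 n] =ᵐ[μ] μ[A | 𝒢 n] + μ[B * X (n + 1) | 𝒢 n] := by
      rw [he]; exact condExp_add hiA hiBX _
    have hstep2 : μ[A | 𝒢 n] = A :=
      condExp_of_stronglyMeasurable (𝒢.le n) hAg hiA
    have hstep3 : μ[B * X (n + 1) | 𝒢 n] =ᵐ[μ] B * μ[X (n + 1) | 𝒢 n] :=
      condExp_mul_of_stronglyMeasurable_left hBg hiBX hiX
    have hstep4 : (B * μ[X (n + 1) | 𝒢 n] : Ω → ℝ) =ᵐ[μ] B * M n :=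
      EventuallyEq.mul (EventuallyEq.refl _ B) (hcondX n hn)
    have hfinal : (A + B * M n : Ω → ℝ) = M n := by
      funext ω
      simp only [hA, hB, hM, Pi.add_apply, Pi.mul_apply]
      have h1 := hDk ω
      have h2 := hden n ω
      field_simp
    calc M n = A + B * M n := hfinal.symm
    _ =ᵐ[μ] μ[A | 𝒢 n] + μ[B * X (n + 1) | 𝒢 n] := by
        rw [hstep2]
        exact EventuallyEq.add (EventuallyEq.refl _ _) (hstep3.trans hstep4).symm
    _ =ᵐ[μ] μ[M (n + 1) | 𝒢 n] := hstep1.symm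
end

section
/- If (X_n) is G-c.i.d. and f : E → ℝ is measurable with E|f(X_1)| < ∞, then there is an integrable random variable V_f such that E[f(X_{n+1}) | G_n] → V_f almost surely and in L¹, and E[V_f | G_n] = E[f(X_{n+1}) | G_n] a.s. for every n ≥ 0. -/
open MeasureTheory Filter

open scoped ENNReal NNReal

/-- Conditional expectations `E[Y i | ℱ i]` of a uniformly integrable family are uniformly
integrable. -/
lemma uniformIntegrable_condexp_of_uniformIntegrable {ι Ω : Type*} {m0 : MeasurableSpace Ω}
    {μ : Measure Ω} [IsFiniteMeasure μ] {Y : ι → Ω → ℝ} (hYint : ∀ i, Integrable (Y i) μ)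
    (hunif : UniformIntegrable Y 1 μ) {ℱ : ι → MeasurableSpace Ω} (hℱ : ∀ i, ℱ i ≤ m0) :
    UniformIntegrable (fun i => μ[Y i|ℱ i]) 1 μ := by
  obtain ⟨hYmeas, hY2, R, hR⟩ := hunif
  refine uniformIntegrable_of le_rfl ENNReal.one_ne_top
    (fun i => (stronglyMeasurable_condExp.mono (hℱ i)).aestronglyMeasurable) fun ε hε => ?_
  obtain ⟨δ, hδ, h⟩ := hY2 hε
  have hδ0 : δ.toNNReal ≠ 0 := (Real.toNNReal_pos.2 hδ).ne'
  obtain ⟨C, hCpos, hCδ⟩ : ∃ C : ℝ≥0, 0 < C ∧ C * δ.toNNReal = R + 1 :=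
    ⟨(δ.toNNReal)⁻¹ * (R + 1),
      mul_pos (inv_pos.2 (Real.toNNReal_pos.2 hδ))
        (add_pos_of_nonneg_of_pos (zero_le : 0 ≤ R) zero_lt_one),
      by rw [mul_comm (δ.toNNReal)⁻¹ (R + 1), mul_assoc, inv_mul_cancel₀ hδ0, mul_one]⟩
  have hnn : C⁻¹ * R ≤ δ.toNNReal := by
    rw [inv_mul_le_iff₀ hCpos, hCδ]
    exact self_le_add_right _ _
  have hmeasμ : ∀ i, μ {x | (C : ℝ≥0) ≤ ‖(μ[Y i|ℱ i]) x‖₊} ≤ ENNReal.ofReal δ := by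
    intro i
    have hmk := meas_ge_le_mul_pow_eLpNorm_enorm (μ := μ) (f := μ[Y i|ℱ i]) one_ne_zero
      ENNReal.one_ne_top ((stronglyMeasurable_condExp.mono (hℱ i)).aestronglyMeasurable)
      (ε := (C : ℝ≥0∞)) (by exact_mod_cast hCpos.ne') (fun h => absurd h ENNReal.coe_ne_top)
    simp only [ENNReal.toReal_one, ENNReal.rpow_one, enorm_eq_nnnorm] at hmk
    have hsets : {x | (C : ℝ≥0∞) ≤ (‖(μ[Y i|ℱ i]) x‖₊ : ℝ≥0∞)}
        = {x | C ≤ ‖(μ[Y i|ℱ i]) x‖₊} := by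
      ext x; exact ENNReal.coe_le_coe
    rw [hsets] at hmk
    refine hmk.trans ?_
    have h1 : eLpNorm (μ[Y i|ℱ i]) 1 μ ≤ (R : ℝ≥0∞) :=
      (eLpNorm_one_condExp_le_eLpNorm _).trans (hR i)
    calc (C : ℝ≥0∞)⁻¹ * eLpNorm (μ[Y i|ℱ i]) 1 μ
        ≤ (C : ℝ≥0∞)⁻¹ * R := by gcongr
      _ = ((C⁻¹ * R : ℝ≥0) : ℝ≥0∞) := by
          rw [ENNReal.coe_mul, ENNReal.coe_inv hCpos.ne']
      _ ≤ ((δ.toNNReal : ℝ≥0) : ℝ≥0∞) := ENNReal.coe_le_coe.2 hnn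
      _ = ENNReal.ofReal δ := rfl
  refine ⟨C, fun i => ?_⟩
  have hsm : MeasurableSet[ℱ i] {x | (C : ℝ≥0) ≤ ‖(μ[Y i|ℱ i]) x‖₊} :=
    @measurableSet_le _ _ _ _ _ (ℱ i) _ _ _ _ _ measurable_const
      (@Measurable.nnnorm _ _ _ _ _ (ℱ i) _ stronglyMeasurable_condExp.measurable)
  rw [← eLpNorm_congr_ae (condExp_indicator (hYint i) hsm)]
  exact (eLpNorm_one_condExp_le_eLpNorm _).trans
    (h i _ ((hℱ i) _ hsm) (hmeasμ i))

/-- If `(X n)` is `𝒢`-c.i.d. and `E|f (X 1)| < ∞`, then there is an integrable `V` with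
`E[f (X (n+1)) | 𝒢 n] → V` a.s. and in `L¹`, and `E[V | 𝒢 n] = E[f (X (n+1)) | 𝒢 n]` a.s.
for every `n`. -/
theorem stmt7 {Ω E : Type*} {mΩ : MeasurableSpace Ω} [MeasurableSpace E]
    (μ : Measure Ω) [IsProbabilityMeasure μ] (𝒢 : Filtration ℕ mΩ) (X : ℕ → Ω → E)
    (hadp : ∀ n, 1 ≤ n → Measurable[𝒢 n] (X n))
    (hcid : IsCID μ 𝒢 X)
    (f : E → ℝ) (hf : Measurable f) (hint : Integrable (fun ω => f (X 1 ω)) μ) :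
    ∃ V : Ω → ℝ, Integrable V μ ∧
      (∀ᵐ ω ∂μ, Tendsto (fun n => (μ[(fun ω' => f (X (n + 1) ω')) | 𝒢 n]) ω)
        atTop (nhds (V ω))) ∧
      Tendsto (fun n => ∫ ω, |(μ[(fun ω' => f (X (n + 1) ω')) | 𝒢 n]) ω - V ω| ∂μ)
        atTop (nhds 0) ∧
      ∀ n, μ[V | 𝒢 n] =ᵐ[μ] μ[(fun ω' => f (X (n + 1) ω')) | 𝒢 n] := by
  -- measurability of the `X k`, `k ≥ 1`
  have hXm : ∀ k, 1 ≤ k → Measurable (X k) := fun k hk => (hadp k hk).mono (𝒢.le k) le_rfl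
  -- the laws of the `X k`, `k ≥ 1`, all coincide
  have hmap : ∀ k, 1 ≤ k → μ.map (X k) = μ.map (X 1) := by
    intro k hk
    rcases eq_or_lt_of_le hk with hk1 | hk1
    · rw [← hk1]
    ext s hs
    rw [Measure.map_apply (hXm k hk) hs, Measure.map_apply (hXm 1 le_rfl) hs]
    have hg : Measurable (s.indicator (fun _ => (1 : ℝ))) :=
      measurable_const.indicator hs
    have hgb : ∃ C, ∀ x, |s.indicator (fun _ => (1 : ℝ)) x| ≤ C := by
      refine ⟨1, fun x => ?_⟩
      by_cases hx : x ∈ s <;> simp [Set.indicator_apply, hx]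
    have h1 := hcid _ hg hgb 0 k (Nat.pos_of_ne_zero (by omega))
    simp only [zero_add] at h1
    have h2 : ∀ j, 1 ≤ j → ∫ ω, s.indicator (fun _ => (1 : ℝ)) (X j ω) ∂μ
        = (μ (X j ⁻¹' s)).toReal := by
      intro j hj
      have : (fun ω => s.indicator (fun _ => (1 : ℝ)) (X j ω))
          = (X j ⁻¹' s).indicator (fun _ => (1 : ℝ)) := by
        ext ω; by_cases hω : X j ω ∈ s <;>
          simp [Set.indicator_apply, hω, Set.mem_preimage]
      rw [this, integral_indicator_const (1 : ℝ) (hXm j hj hs)]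
      simp [Measure.real]
    have hik : ∀ j, 1 ≤ j → Integrable (fun ω => s.indicator (fun _ => (1 : ℝ)) (X j ω)) μ := by
      intro j hj
      obtain ⟨C, hCb⟩ := hgb
      exact (integrable_const C).mono' ((hg.comp (hXm j hj)).aestronglyMeasurable)
        (Eventually.of_forall fun ω => by
          simpa [Real.norm_eq_abs] using hCb (X j ω))
    have h3 : (μ (X k ⁻¹' s)).toReal = (μ (X 1 ⁻¹' s)).toReal := by
      calc (μ (X k ⁻¹' s)).toReal
          = ∫ ω, s.indicator (fun _ => (1 : ℝ)) (X k ω) ∂μ := (h2 k hk).symm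
        _ = ∫ ω, (μ[(fun ω' => s.indicator (fun _ => (1 : ℝ)) (X k ω')) | 𝒢 0]) ω ∂μ :=
            (integral_condExp (𝒢.le 0)).symm
        _ = ∫ ω, (μ[(fun ω' => s.indicator (fun _ => (1 : ℝ)) (X 1 ω')) | 𝒢 0]) ω ∂μ :=
            integral_congr_ae h1
        _ = ∫ ω, s.indicator (fun _ => (1 : ℝ)) (X 1 ω) ∂μ := integral_condExp (𝒢.le 0)
        _ = (μ (X 1 ⁻¹' s)).toReal := h2 1 le_rfl
    exact (ENNReal.toReal_eq_toReal_iff' (measure_ne_top μ _) (measure_ne_top μ _)).mp h3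
  -- integrability transfer
  have hfi1 : Integrable f (μ.map (X 1)) :=
    (integrable_map_measure hf.aestronglyMeasurable (hXm 1 le_rfl).aemeasurable).mpr hint
  have hYint : ∀ k, 1 ≤ k → Integrable (fun ω => f (X k ω)) μ := by
    intro k hk
    have : Integrable f (μ.map (X k)) := by rw [hmap k hk]; exact hfi1
    exact (integrable_map_measure hf.aestronglyMeasurable (hXm k hk).aemeasurable).mp this
  -- truncations
  set fM : ℕ → E → ℝ := fun M x => max (min (f x) M) (-(M : ℝ)) with hfM
  have hfMm : ∀ M, Measurable (fM M) := fun M => (hf.min measurable_const).max measurable_const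
  have hfMb : ∀ M : ℕ, ∀ x, |fM M x| ≤ M := by
    intro M x
    rw [abs_le]
    constructor
    · exact le_max_right _ _
    · exact max_le (min_le_right _ _) (neg_le_self (Nat.cast_nonneg M))
  have hfMabs : ∀ M x, |fM M x| ≤ |f x| := by
    intro M x
    rw [abs_le]
    constructor
    · refine le_max_of_le_left (le_min (neg_abs_le _) ?_)
      exact (neg_nonpos.mpr (abs_nonneg _)).trans (by positivity)
    · exact max_le ((min_le_left _ _).trans (le_abs_self _))
        ((neg_nonpos.mpr (by positivity)).trans (abs_nonneg _))
  have hfMint : ∀ M, ∀ k, 1 ≤ k → Integrable (fun ω => fM M (X k ω)) μ := by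
    intro M k hk
    exact (integrable_const (M : ℝ)).mono' (((hfMm M).comp (hXm k hk)).aestronglyMeasurable)
      (Eventually.of_forall fun ω => by simpa [Real.norm_eq_abs] using hfMb M (X k ω))
  -- L¹ distance from truncation, computed under the common law
  set a : ℕ → ℝ≥0∞ := fun M => ∫⁻ x, ‖f x - fM M x‖₊ ∂(μ.map (X 1)) with ha
  have hkey : ∀ k, 1 ≤ k → ∀ M : ℕ,
      (∫⁻ ω, ‖f (X k ω) - fM M (X k ω)‖₊ ∂μ) = a M := by
    intro k hk M
    show _ = ∫⁻ x, ‖f x - fM M x‖₊ ∂(μ.map (X 1))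
    rw [← hmap k hk,
      lintegral_map (f := fun x => (‖f x - fM M x‖₊ : ℝ≥0∞))
        ((hf.sub (hfMm M)).nnnorm.coe_nnreal_ennreal) (hXm k hk)]
  have htend : Tendsto a atTop (nhds 0) := by
    have h0 : (0 : ℝ≥0∞) = ∫⁻ x, (0 : ℝ≥0∞) ∂(μ.map (X 1)) := by simp
    rw [h0]
    refine tendsto_lintegral_of_dominated_convergence
      (fun x => (2 : ℝ≥0∞) * (‖f x‖₊ : ℝ≥0∞))
      (fun M => (hf.sub (hfMm M)).nnnorm.coe_nnreal_ennreal)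
      (fun M => Eventually.of_forall fun x => ?_) ?_ (Eventually.of_forall fun x => ?_)
    · have hle : ‖fM M x‖₊ ≤ ‖f x‖₊ := by
        rw [← NNReal.coe_le_coe, coe_nnnorm, coe_nnnorm]
        simpa [Real.norm_eq_abs] using hfMabs M x
      have h2 : ‖f x - fM M x‖₊ ≤ 2 * ‖f x‖₊ :=
        (nnnorm_sub_le _ _).trans (by rw [two_mul]; exact add_le_add le_rfl hle)
      calc ((‖f x - fM M x‖₊ : ℝ≥0∞)) ≤ ((2 * ‖f x‖₊ : ℝ≥0) : ℝ≥0∞) := ENNReal.coe_le_coe.2 h2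
        _ = (2 : ℝ≥0∞) * (‖f x‖₊ : ℝ≥0∞) := by rw [ENNReal.coe_mul]; norm_num
    · rw [lintegral_const_mul 2 (hf.nnnorm.coe_nnreal_ennreal)]
      have hfin : (∫⁻ x, ‖f x‖₊ ∂(μ.map (X 1))) < ⊤ := hfi1.2
      exact (ENNReal.mul_lt_top (by norm_num) hfin).ne
    · refine tendsto_atTop_of_eventually_const (i₀ := ⌈|f x|⌉₊) fun M hM => ?_
      have habs : |f x| ≤ (M : ℝ) := (Nat.le_ceil _).trans (by exact_mod_cast hM)
      have h1 : fM M x = f x := by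
        show max (min (f x) (M : ℝ)) (-(M : ℝ)) = f x
        rw [min_eq_left (le_trans (le_abs_self _) habs),
          max_eq_left (le_trans (neg_le_neg habs) (neg_abs_le _))]
      simp [h1]
  -- extension of the c.i.d. property to integrable `f`
  have hcid' : ∀ n k : ℕ, n < k →
      μ[(fun ω => f (X k ω)) | 𝒢 n] =ᵐ[μ] μ[(fun ω => f (X (n + 1) ω)) | 𝒢 n] := by
    intro n k hnk
    have hk1 : 1 ≤ k := by omega
    set D : Ω → ℝ := μ[(fun ω => f (X k ω)) | 𝒢 n] - μ[(fun ω => f (X (n + 1) ω)) | 𝒢 n]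
      with hD
    have hDm : AEStronglyMeasurable D μ :=
      ((stronglyMeasurable_condExp.mono (𝒢.le n)).sub
        (stronglyMeasurable_condExp.mono (𝒢.le n))).aestronglyMeasurable
    have hbound : ∀ M : ℕ, eLpNorm D 1 μ ≤ 2 * a M := by
      intro M
      have hfMbdd : ∃ C, ∀ x, |fM M x| ≤ C := ⟨M, hfMb M⟩
      have hmid := hcid (fM M) (hfMm M) hfMbdd n k hnk
      have hA : (μ[(fun ω => f (X k ω)) | 𝒢 n] - μ[(fun ω => fM M (X k ω)) | 𝒢 n])
          =ᵐ[μ] μ[(fun ω => f (X k ω) - fM M (X k ω)) | 𝒢 n] :=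
        (condExp_sub (hYint k hk1) (hfMint M k hk1) _).symm
      have hB : (μ[(fun ω => fM M (X (n + 1) ω)) | 𝒢 n]
            - μ[(fun ω => f (X (n + 1) ω)) | 𝒢 n])
          =ᵐ[μ] μ[(fun ω => fM M (X (n + 1) ω) - f (X (n + 1) ω)) | 𝒢 n] :=
        (condExp_sub (hfMint M (n + 1) (by omega)) (hYint (n + 1) (by omega)) _).symm
      have hDeq : D =ᵐ[μ] (μ[(fun ω => f (X k ω) - fM M (X k ω)) | 𝒢 n])
          + (μ[(fun ω => fM M (X (n + 1) ω) - f (X (n + 1) ω)) | 𝒢 n]) := by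
        filter_upwards [hmid, hA, hB] with ω h1 h2 h3
        simp only [hD, Pi.sub_apply, Pi.add_apply] at *
        linarith
      calc eLpNorm D 1 μ
          ≤ eLpNorm (μ[(fun ω => f (X k ω) - fM M (X k ω)) | 𝒢 n]) 1 μ
            + eLpNorm (μ[(fun ω => fM M (X (n + 1) ω) - f (X (n + 1) ω)) | 𝒢 n]) 1 μ := by
            rw [eLpNorm_congr_ae hDeq]
            exact eLpNorm_add_le
              (stronglyMeasurable_condExp.mono (𝒢.le n)).aestronglyMeasurable
              (stronglyMeasurable_condExp.mono (𝒢.le n)).aestronglyMeasurable le_rfl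
        _ ≤ eLpNorm (fun ω => f (X k ω) - fM M (X k ω)) 1 μ
            + eLpNorm (fun ω => fM M (X (n + 1) ω) - f (X (n + 1) ω)) 1 μ := by
            gcongr <;> exact eLpNorm_one_condExp_le_eLpNorm _
        _ = a M + a M := by
            rw [eLpNorm_one_eq_lintegral_enorm, eLpNorm_one_eq_lintegral_enorm]
            congr 1
            · exact hkey k hk1 M
            · rw [← hkey (n + 1) (by omega) M]
              congr 1
              ext ω
              rw [← nnnorm_neg]
              congr 1
              ring
        _ = 2 * a M := (two_mul _).symm
    have h0 : eLpNorm D 1 μ ≤ 0 := by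
      have h2 : Tendsto (fun M => 2 * a M) atTop (nhds 0) := by
        have := ENNReal.Tendsto.const_mul htend (Or.inr (by norm_num : (2 : ℝ≥0∞) ≠ ⊤))
        simpa using this
      exact ge_of_tendsto' h2 hbound
    have hD0 : D =ᵐ[μ] 0 :=
      (eLpNorm_eq_zero_iff hDm one_ne_zero).mp (le_antisymm h0 zero_le)
    filter_upwards [hD0] with ω hω
    have : D ω = 0 := hω
    rw [hD] at this
    simp only [Pi.sub_apply] at this
    linarith
  -- the martingale
  set M : ℕ → Ω → ℝ := fun n => μ[(fun ω' => f (X (n + 1) ω')) | 𝒢 n] with hM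
  have hmart : Martingale M 𝒢 μ := by
    refine ⟨fun n => stronglyMeasurable_condExp, fun i j hij => ?_⟩
    calc μ[M j | 𝒢 i] =ᵐ[μ] μ[(fun ω' => f (X (j + 1) ω')) | 𝒢 i] :=
        condExp_condExp_of_le (𝒢.mono hij) (𝒢.le j)
      _ =ᵐ[μ] μ[(fun ω' => f (X (i + 1) ω')) | 𝒢 i] := hcid' i (j + 1) (by omega)
  -- uniform integrability
  have hident : ∀ n : ℕ, ProbabilityTheory.IdentDistrib (fun ω => f (X (n + 1) ω))
      (fun ω => f (X (0 + 1) ω)) μ μ := by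
    intro n
    refine ⟨(hf.comp (hXm (n + 1) (by omega))).aemeasurable,
      (hf.comp (hXm 1 le_rfl)).aemeasurable, ?_⟩
    show μ.map (f ∘ X (n + 1)) = μ.map (f ∘ X (0 + 1))
    rw [← Measure.map_map hf (hXm (n + 1) (by omega)), ← Measure.map_map hf (hXm 1 le_rfl),
      hmap (n + 1) (by omega)]
  have hYunif : UniformIntegrable (fun n : ℕ => fun ω => f (X (n + 1) ω)) 1 μ :=
    ProbabilityTheory.MemLp.uniformIntegrable_of_identDistrib (j := 0) le_rfl ENNReal.one_ne_top
      (memLp_one_iff_integrable.mpr hint) hident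
  have hMunif : UniformIntegrable M 1 μ :=
    uniformIntegrable_condexp_of_uniformIntegrable
      (fun n => hYint (n + 1) (by omega)) hYunif (fun n => 𝒢.le n)
  obtain ⟨R, hR⟩ := hMunif.2.2
  -- the limit
  set V : Ω → ℝ := 𝒢.limitProcess M μ with hV
  have hVint : Integrable V μ :=
    memLp_one_iff_integrable.mp (hmart.submartingale.memLp_limitProcess hR)
  have haet : ∀ᵐ ω ∂μ, Tendsto (fun n => M n ω) atTop (nhds (V ω)) :=
    hmart.submartingale.ae_tendsto_limitProcess hR
  have hL1 : Tendsto (fun n => eLpNorm (M n - V) 1 μ) atTop (nhds 0) :=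
    hmart.submartingale.tendsto_eLpNorm_one_limitProcess hMunif
  refine ⟨V, hVint, haet, ?_, fun n => (hmart.ae_eq_condExp_limitProcess hMunif n).symm⟩
  -- convert the `eLpNorm` convergence into convergence of integrals
  have heq : ∀ n, ∫ ω, |M n ω - V ω| ∂μ = (eLpNorm (M n - V) 1 μ).toReal := by
    intro n
    rw [eLpNorm_one_eq_lintegral_enorm]
    rw [← integral_norm_eq_lintegral_enorm
      (((stronglyMeasurable_condExp.mono (𝒢.le n)).aestronglyMeasurable).sub
        hVint.aestronglyMeasurable)]
    simp [Real.norm_eq_abs]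
    rfl
  show Tendsto (fun n => ∫ ω, |M n ω - V ω| ∂μ) atTop (nhds 0)
  simp only [heq]
  have := (ENNReal.tendsto_toReal ENNReal.zero_ne_top).comp hL1
  exact this
end

section
/- If (X_n) is G-c.i.d. and f_1, ..., f_k are bounded measurable real functions on E (k > 1), then E[∏_{j=1}^k f_j(X_{n+j}) | G_n] converges almost surely and in L¹ to ∏_{j=1}^k V_{f_j}, where V_{f_j} is the a.s. limit of E[f_j(X_{n+1}) | G_n]. -/
open MeasureTheory Filter
open scoped Topology

namespace Stmt8Helpers

variable {Ω : Type*} {mΩ : MeasurableSpace Ω} {μ : Measure Ω} [IsProbabilityMeasure μ]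

lemma integrable_of_bdd {f : Ω → ℝ} {C : ℝ} (hm : AEStronglyMeasurable f μ)
    (hC : ∀ᵐ ω ∂μ, |f ω| ≤ C) : Integrable f μ :=
  (integrable_const C).mono' hm (hC.mono fun ω h => by simpa [Real.norm_eq_abs] using h)

lemma abs_condexp_le_condexp_abs {m : MeasurableSpace Ω} {f : Ω → ℝ} (hf : Integrable f μ) :
    ∀ᵐ ω ∂μ, |(μ[f|m]) ω| ≤ (μ[(fun ω => |f ω|)|m]) ω := by
  have h1 : μ[f|m] ≤ᵐ[μ] μ[(fun ω => |f ω|)|m] :=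
    condExp_mono hf hf.abs (Eventually.of_forall fun ω => le_abs_self _)
  have h2 : μ[(-f)|m] ≤ᵐ[μ] μ[(fun ω => |f ω|)|m] :=
    condExp_mono hf.neg hf.abs (Eventually.of_forall fun ω => neg_le_abs _)
  have h3 : μ[(-f)|m] =ᵐ[μ] -μ[f|m] := condExp_neg f m
  filter_upwards [h1, h2, h3] with ω h1 h2 h3
  rw [abs_le]
  constructor
  · have h2' : (μ[(-f)|m]) ω ≤ (μ[(fun ω => |f ω|)|m]) ω := h2
    rw [h3] at h2'
    simpa using neg_le.mp (by simpa using h2')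
  · exact h1

lemma ae_abs_condexp_le {m : MeasurableSpace Ω} (hm : m ≤ mΩ) {f : Ω → ℝ} {C : ℝ}
    (hmeas : AEStronglyMeasurable[mΩ] f μ) (hC : ∀ᵐ ω ∂μ, |f ω| ≤ C) :
    ∀ᵐ ω ∂μ, |(μ[f|m]) ω| ≤ C := by
  have hint : Integrable f μ := integrable_of_bdd hmeas hC
  have h2 : μ[(fun ω => |f ω|)|m] ≤ᵐ[μ] μ[(fun _ => C)|m] :=
    condExp_mono hint.abs (integrable_const C) hC
  have h3 : μ[(fun _ : Ω => C)|m] = fun _ => C := condExp_const hm C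
  filter_upwards [abs_condexp_le_condexp_abs hint, h2] with ω ha hb
  calc |(μ[f|m]) ω| ≤ (μ[(fun ω => |f ω|)|m]) ω := ha
    _ ≤ (μ[(fun _ : Ω => C)|m]) ω := hb
    _ = C := by rw [h3]

lemma exists_stronglyMeasurable_limit {m : MeasurableSpace Ω} (hm : m ≤ mΩ)
    {h : ℕ → Ω → ℝ} (hmeas : ∀ n, StronglyMeasurable[m] (h n)) {p : Ω → ℝ}
    (hp : ∀ᵐ ω ∂μ, Tendsto (fun n => h n ω) atTop (𝓝 (p ω))) :
    ∃ p' : Ω → ℝ, StronglyMeasurable[m] p' ∧ p =ᵐ[μ] p' := by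
  classical
  set g' : Ω → ℝ :=
    fun ω => if hc : ∃ c, Tendsto (fun n => h n ω) atTop (𝓝 c) then hc.choose else 0 with hg'def
  have hmeas' : ∀ n, Measurable[m] (h n) := fun n => (hmeas n).measurable
  have hset : MeasurableSet[m] {ω | ∃ c, Tendsto (fun n => h n ω) atTop (𝓝 c)} :=
    measurableSet_exists_tendsto hmeas'
  have hae : ∀ᵐ ω ∂μ, ∃ c, Tendsto (fun n => h n ω) atTop (𝓝 c) :=
    hp.mono fun ω hω => ⟨p ω, hω⟩
  have htrim : ∀ᵐ ω ∂μ.trim hm, ∃ c, Tendsto (fun n => h n ω) atTop (𝓝 c) := by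
    rw [ae_iff] at hae ⊢
    exact (trim_measurableSet_eq hm hset.compl).trans hae
  have hg'ten : ∀ᵐ ω ∂μ.trim hm, Tendsto (fun n => h n ω) atTop (𝓝 (g' ω)) := by
    filter_upwards [htrim] with ω hω
    simp only [hg'def, dif_pos hω]
    exact hω.choose_spec
  have hg'm : AEMeasurable g' (μ.trim hm) :=
    aemeasurable_of_tendsto_metrizable_ae' (fun n => (hmeas' n).aemeasurable) hg'ten
  refine ⟨hg'm.mk g', (hg'm.measurable_mk).stronglyMeasurable, ?_⟩
  have h1 : ∀ᵐ ω ∂μ.trim hm, Tendsto (fun n => h n ω) atTop (𝓝 (hg'm.mk g' ω)) := by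
    filter_upwards [hg'ten, hg'm.ae_eq_mk] with ω h1 h2
    exact h2 ▸ h1
  have h2 : ∀ᵐ ω ∂μ, Tendsto (fun n => h n ω) atTop (𝓝 (hg'm.mk g' ω)) := by
    rw [ae_iff] at h1 ⊢
    exact measure_eq_zero_of_trim_eq_zero hm h1
  filter_upwards [hp, h2] with ω hω h2ω
  exact tendsto_nhds_unique hω h2ω

/-- Key lemma: if `D m → 0` a.e. and is uniformly bounded, then
`μ[|D (n + s)| | 𝒢 n] → 0` a.e. -/
lemma keyL (𝒢 : Filtration ℕ mΩ) (D : ℕ → Ω → ℝ) (C : ℝ)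
    (hmeas : ∀ m, AEStronglyMeasurable (D m) μ)
    (hC : ∀ m, ∀ᵐ ω ∂μ, |D m ω| ≤ C)
    (hten : ∀ᵐ ω ∂μ, Tendsto (fun m => D m ω) atTop (𝓝 0)) (s : ℕ) :
    ∀ᵐ ω ∂μ, Tendsto (fun n => (μ[(fun x => |D (n + s) x|)|𝒢 n]) ω) atTop (𝓝 0) := by
  classical
  have hmsup : (⨆ n, (𝒢 n : MeasurableSpace Ω)) ≤ mΩ := sSup_le fun m ⟨n, hn⟩ => hn ▸ 𝒢.le _
  set D' : ℕ → Ω → ℝ := fun m => (hmeas m).mk (D m) with hD'def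
  have hD'meas : ∀ m, Measurable (D' m) := fun m => (hmeas m).measurable_mk
  have hDD' : ∀ᵐ ω ∂μ, ∀ m, D m ω = D' m ω := ae_all_iff.2 fun m => (hmeas m).ae_eq_mk
  set S : ℕ → Ω → ℝ := fun N ω => ⨆ m : ℕ, |D' (N + m) ω| with hSdef
  have hSmeas : ∀ N, Measurable (S N) := fun N => Measurable.iSup fun m => (hD'meas _).abs
  have hSnonneg : ∀ N ω, 0 ≤ S N ω := fun N ω => Real.iSup_nonneg fun m => abs_nonneg _
  have hgood : ∀ᵐ ω ∂μ, ∀ m, |D' m ω| ≤ C := by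
    filter_upwards [ae_all_iff.2 hC, hDD'] with ω h1 h2 m
    rw [← h2 m]; exact h1 m
  have hbddA : ∀ᵐ ω ∂μ, ∀ N, BddAbove (Set.range fun m : ℕ => |D' (N + m) ω|) :=
    hgood.mono fun ω h N => ⟨C, by rintro x ⟨m, rfl⟩; exact h _⟩
  have hSleC : ∀ᵐ ω ∂μ, ∀ N, S N ω ≤ C := hgood.mono fun ω h N => ciSup_le fun m => h _
  have hSanti : ∀ᵐ ω ∂μ, ∀ N, S (N + 1) ω ≤ S N ω := by
    filter_upwards [hbddA] with ω h N
    refine ciSup_le fun m => ?_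
    have he : N + 1 + m = N + (m + 1) := by omega
    rw [he]
    exact le_ciSup (h N) (m + 1)
  have hSabs : ∀ N, ∀ᵐ ω ∂μ, |S N ω| ≤ C := fun N =>
    hSleC.mono fun ω h => by rw [abs_of_nonneg (hSnonneg N ω)]; exact h N
  have hSint : ∀ N, Integrable (S N) μ :=
    fun N => integrable_of_bdd (hSmeas N).aestronglyMeasurable (hSabs N)
  have hSto : ∀ᵐ ω ∂μ, Tendsto (fun N => S N ω) atTop (𝓝 0) := by
    filter_upwards [hten, hDD'] with ω h1 h2
    rw [Metric.tendsto_atTop]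
    intro ε hε
    have h1' : Tendsto (fun m => D' m ω) atTop (𝓝 0) :=
      h1.congr fun m => h2 m
    obtain ⟨M, hM⟩ := (Metric.tendsto_atTop.1 h1') (ε / 2) (by positivity)
    refine ⟨M, fun N hN => ?_⟩
    have hle : S N ω ≤ ε / 2 := by
      refine ciSup_le fun m => ?_
      have := hM (N + m) (le_trans hN (Nat.le_add_right _ _))
      rw [Real.dist_eq, sub_zero] at this
      exact this.le
    rw [Real.dist_eq, sub_zero, abs_of_nonneg (hSnonneg N ω)]
    linarith
  set g : ℕ → Ω → ℝ := fun N => μ[S N|⨆ n, (𝒢 n : MeasurableSpace Ω)] with hgdef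
  have hgnonneg : ∀ᵐ ω ∂μ, ∀ N, 0 ≤ g N ω :=
    ae_all_iff.2 fun N => condExp_nonneg (Eventually.of_forall fun ω => hSnonneg N ω)
  have hganti : ∀ᵐ ω ∂μ, ∀ N, g (N + 1) ω ≤ g N ω :=
    ae_all_iff.2 fun N =>
      condExp_mono (hSint _) (hSint _) (hSanti.mono fun ω h => h N)
  have hgleC : ∀ᵐ ω ∂μ, ∀ N, |g N ω| ≤ C :=
    ae_all_iff.2 fun N => ae_abs_condexp_le hmsup (hSmeas N).aestronglyMeasurable (hSabs N)
  have hintS : Tendsto (fun N => ∫ ω, S N ω ∂μ) atTop (𝓝 0) := by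
    have h0 : (0 : ℝ) = ∫ _ : Ω, (0 : ℝ) ∂μ := by simp
    rw [h0]
    exact tendsto_integral_of_dominated_convergence (fun _ => C)
      (fun N => (hSmeas N).aestronglyMeasurable) (integrable_const C)
      (fun N => (hSabs N).mono fun ω h => by simpa [Real.norm_eq_abs] using h) hSto
  have hintg : ∀ N, ∫ ω, g N ω ∂μ = ∫ ω, S N ω ∂μ := fun N => integral_condExp hmsup
  set L : Ω → ℝ := fun ω => ⨅ N, g N ω with hLdef
  have hgmeasΩ : ∀ N, Measurable (g N) :=
    fun N => (stronglyMeasurable_condExp.mono hmsup).measurable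
  have hLmeas : Measurable L := Measurable.iInf fun N => hgmeasΩ N
  have hgto : ∀ᵐ ω ∂μ, Tendsto (fun N => g N ω) atTop (𝓝 (L ω)) := by
    filter_upwards [hgnonneg, hganti] with ω h1 h2
    exact tendsto_atTop_ciInf (antitone_nat_of_succ_le h2)
      ⟨0, by rintro x ⟨N, rfl⟩; exact h1 N⟩
  have hLabs : ∀ᵐ ω ∂μ, |L ω| ≤ C := by
    filter_upwards [hgnonneg, hgleC] with ω h1 h2
    have hLn : 0 ≤ L ω := le_ciInf h1
    have hLle : L ω ≤ g 0 ω := ciInf_le ⟨0, by rintro x ⟨N, rfl⟩; exact h1 N⟩ 0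
    rw [abs_of_nonneg hLn]
    calc L ω ≤ g 0 ω := hLle
      _ ≤ |g 0 ω| := le_abs_self _
      _ ≤ C := h2 0
  have hLint : Integrable L μ := integrable_of_bdd hLmeas.aestronglyMeasurable hLabs
  have hgintto : Tendsto (fun N => ∫ ω, g N ω ∂μ) atTop (𝓝 (∫ ω, L ω ∂μ)) :=
    tendsto_integral_of_dominated_convergence (fun _ => C)
      (fun N => (hgmeasΩ N).aestronglyMeasurable) (integrable_const C)
      (fun N => (hgleC.mono fun ω h => by simpa [Real.norm_eq_abs] using h N)) hgto
  have hL0 : ∫ ω, L ω ∂μ = 0 := by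
    refine tendsto_nhds_unique hgintto ?_
    simp only [hintg]
    exact hintS
  have hLzero : ∀ᵐ ω ∂μ, L ω = 0 := by
    have hLnn : 0 ≤ᵐ[μ] L := hgnonneg.mono fun ω h => le_ciInf h
    have := (integral_eq_zero_iff_of_nonneg_ae hLnn hLint).1 hL0
    filter_upwards [this] with ω h
    exact h
  have hLevy : ∀ᵐ ω ∂μ, ∀ N, Tendsto (fun n => (μ[g N|𝒢 n]) ω) atTop (𝓝 (g N ω)) :=
    ae_all_iff.2 fun N =>
      Integrable.tendsto_ae_condExp integrable_condExp stronglyMeasurable_condExp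
  have hcc : ∀ᵐ ω ∂μ, ∀ N n, (μ[g N|𝒢 n]) ω = (μ[S N|𝒢 n]) ω :=
    ae_all_iff.2 fun N => ae_all_iff.2 fun n =>
      condExp_condExp_of_le (le_iSup (fun i => (𝒢 i : MeasurableSpace Ω)) n) hmsup
  have hDabsint : ∀ m, Integrable (fun x => |D m x|) μ :=
    fun m => (integrable_of_bdd (hmeas m) (hC m)).abs
  have hmono : ∀ᵐ ω ∂μ, ∀ N n, N ≤ n + s →
      (μ[(fun x => |D (n + s) x|)|𝒢 n]) ω ≤ (μ[S N|𝒢 n]) ω := by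
    rw [ae_all_iff]
    intro N
    rw [ae_all_iff]
    intro n
    by_cases hNn : N ≤ n + s
    · have hle : (fun x => |D (n + s) x|) ≤ᵐ[μ] S N := by
        filter_upwards [hDD', hbddA] with ω h1 h2
        rw [h1 (n + s)]
        obtain ⟨m, hm⟩ : ∃ m, n + s = N + m := ⟨n + s - N, by omega⟩
        rw [hm]
        exact le_ciSup (h2 N) m
      exact (condExp_mono (hDabsint _) (hSint N) hle).mono fun ω h _ => h
    · exact Eventually.of_forall fun ω h => absurd h hNn
  have hnonneg2 : ∀ᵐ ω ∂μ, ∀ n, 0 ≤ (μ[(fun x => |D (n + s) x|)|𝒢 n]) ω :=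
    ae_all_iff.2 fun n => condExp_nonneg (Eventually.of_forall fun ω => abs_nonneg _)
  filter_upwards [hLevy, hcc, hmono, hnonneg2, hgto, hLzero] with ω h1 h2 h3 h4 h5 h6
  rw [Metric.tendsto_atTop]
  intro ε hε
  have h5' : Tendsto (fun N => g N ω) atTop (𝓝 0) := h6 ▸ h5
  obtain ⟨N, hN⟩ := (Metric.tendsto_atTop.1 h5') (ε / 2) (by positivity)
  have hgN : g N ω < ε / 2 := by
    have := hN N le_rfl
    rw [Real.dist_eq, sub_zero] at this
    exact lt_of_le_of_lt (le_abs_self _) this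
  have h1' : Tendsto (fun n => (μ[S N|𝒢 n]) ω) atTop (𝓝 (g N ω)) :=
    (h1 N).congr fun n => h2 N n
  obtain ⟨N₂, hN₂⟩ := (Metric.tendsto_atTop.1 h1') (ε / 2) (by positivity)
  refine ⟨max N N₂, fun n hn => ?_⟩
  obtain ⟨hnN, hnN₂⟩ := sup_le_iff.mp hn
  have hc1 : (μ[(fun x => |D (n + s) x|)|𝒢 n]) ω ≤ (μ[S N|𝒢 n]) ω :=
    h3 N n (by omega)
  have hc2 : |(μ[S N|𝒢 n]) ω - g N ω| < ε / 2 := by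
    have := hN₂ n hnN₂
    rwa [Real.dist_eq] at this
  have hc3 : 0 ≤ (μ[(fun x => |D (n + s) x|)|𝒢 n]) ω := h4 n
  rw [Real.dist_eq, sub_zero, abs_of_nonneg hc3]
  have : (μ[S N|𝒢 n]) ω < g N ω + ε / 2 := by
    have := abs_lt.1 hc2
    linarith [this.2]
  calc (μ[(fun x => |D (n + s) x|)|𝒢 n]) ω ≤ (μ[S N|𝒢 n]) ω := hc1
    _ < g N ω + ε / 2 := this
    _ < ε / 2 + ε / 2 := by linarith
    _ = ε := by ring


lemma main_ind {E : Type*} [MeasurableSpace E] (𝒢 : Filtration ℕ mΩ) (X : ℕ → Ω → E)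
    (hadp : ∀ n, 1 ≤ n → Measurable[𝒢 n] (X n)) :
    ∀ (k : ℕ) (f : Fin (k + 1) → E → ℝ), (∀ j, Measurable (f j)) →
      (∀ j, ∃ C, ∀ x, |f j x| ≤ C) →
      ∀ (V : Fin (k + 1) → Ω → ℝ),
      (∀ j, ∀ᵐ ω ∂μ, Tendsto (fun n => (μ[(fun ω' => f j (X (n + 1) ω'))|𝒢 n]) ω)
        atTop (𝓝 (V j ω))) →
      ∀ᵐ ω ∂μ, Tendsto (fun n => (μ[(fun ω' => ∏ j, f j (X (n + (j : ℕ) + 1) ω'))|𝒢 n]) ω)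
        atTop (𝓝 (∏ j, V j ω)) := by
  intro k
  induction k with
  | zero =>
    intro f hf hbd V hV
    filter_upwards [hV 0] with ω hω
    simpa using hω
  | succ k ih =>
    intro f hf hbd V hV
    classical
    choose C hC using hbd
    set B : Fin (k + 2) → ℝ := fun j => max (C j) 0 with hB
    have hfB : ∀ j x, |f j x| ≤ B j := fun j x => (hC j x).trans (le_max_left _ _)
    have hB0 : ∀ j, 0 ≤ B j := fun j => le_max_right _ _
    have hXmeas : ∀ n, 1 ≤ n → Measurable (X n) := fun n hn => (hadp n hn).mono (𝒢.le n) le_rfl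
    have hmsup : (⨆ n, (𝒢 n : MeasurableSpace Ω)) ≤ mΩ := sSup_le fun m ⟨n, hn⟩ => hn ▸ 𝒢.le _
    have h𝒢sup : ∀ n, (𝒢 n : MeasurableSpace Ω) ≤ ⨆ i, (𝒢 i : MeasurableSpace Ω) :=
      fun n => le_sSup ⟨n, rfl⟩
    set prodF : ℕ → Ω → ℝ := fun n ω => ∏ j : Fin (k + 2), f j (X (n + (j : ℕ) + 1) ω)
      with hprodF
    set prodG : ℕ → Ω → ℝ :=
      fun n ω => ∏ j : Fin (k + 1), f (Fin.succ j) (X (n + (j : ℕ) + 1) ω) with hprodG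
    have hprodFmeas : ∀ n, Measurable (prodF n) := fun n =>
      Finset.measurable_prod _ fun j _ => (hf j).comp (hXmeas _ (by omega))
    have hprodGmeas : ∀ n, Measurable (prodG n) := fun n =>
      Finset.measurable_prod _ fun j _ => (hf _).comp (hXmeas _ (by omega))
    set BG : ℝ := ∏ j : Fin (k + 1), B (Fin.succ j) with hBG
    have hBGnn : 0 ≤ BG := Finset.prod_nonneg fun j _ => hB0 _
    have hprodGbd : ∀ n ω, |prodG n ω| ≤ BG := fun n ω => by
      simp only [hprodG, hBG]
      rw [Finset.abs_prod]
      exact Finset.prod_le_prod (fun j _ => abs_nonneg _) fun j _ => hfB _ _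
    have hprodGint : ∀ n, Integrable (prodG n) μ := fun n =>
      integrable_of_bdd (hprodGmeas n).aestronglyMeasurable
        (Eventually.of_forall (hprodGbd n))
    set Z : ℕ → Ω → ℝ := fun n => μ[prodG n|𝒢 n] with hZdef
    have hZsm : ∀ n, StronglyMeasurable[𝒢 n] (Z n) := fun n => stronglyMeasurable_condExp
    have hZaesm : ∀ n, AEStronglyMeasurable (Z n) μ :=
      fun n => ((hZsm n).mono (𝒢.le n)).aestronglyMeasurable
    have hZbd : ∀ n, ∀ᵐ ω ∂μ, |Z n ω| ≤ BG := fun n =>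
      ae_abs_condexp_le (𝒢.le n) (hprodGmeas n).aestronglyMeasurable
        (Eventually.of_forall (hprodGbd n))
    set P : Ω → ℝ := fun ω => ∏ j : Fin (k + 1), V (Fin.succ j) ω with hP
    have hZten : ∀ᵐ ω ∂μ, Tendsto (fun n => Z n ω) atTop (𝓝 (P ω)) := by
      have := ih (fun j => f (Fin.succ j)) (fun j => hf _) (fun j => ⟨C _, hC _⟩)
        (fun j => V (Fin.succ j)) (fun j => hV _)
      exact this
    have hVaesm : ∀ j, AEStronglyMeasurable (V j) μ := fun j =>
      aestronglyMeasurable_of_tendsto_ae atTop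
        (fun n => (stronglyMeasurable_condExp.mono (𝒢.le n)).aestronglyMeasurable) (hV j)
    have hVbd : ∀ j, ∀ᵐ ω ∂μ, |V j ω| ≤ B j := by
      intro j
      have hMbd : ∀ᵐ ω ∂μ, ∀ n, |(μ[(fun ω' => f j (X (n + 1) ω'))|𝒢 n]) ω| ≤ B j :=
        ae_all_iff.2 fun n => ae_abs_condexp_le (𝒢.le n)
          (((hf j).comp (hXmeas _ (by omega))).aestronglyMeasurable)
          (Eventually.of_forall fun ω => hfB j _)
      filter_upwards [hMbd, hV j] with ω h1 h2
      exact le_of_tendsto h2.abs (Eventually.of_forall h1)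
    have hPaesm : AEStronglyMeasurable P μ :=
      Finset.aestronglyMeasurable_fun_prod _ fun j _ => hVaesm _
    have hPbd : ∀ᵐ ω ∂μ, |P ω| ≤ BG := by
      filter_upwards [ae_all_iff.2 fun j : Fin (k + 1) => hVbd (Fin.succ j)] with ω h
      simp only [hP, hBG]
      rw [Finset.abs_prod]
      exact Finset.prod_le_prod (fun j _ => abs_nonneg _) fun j _ => h j
    have hPint : Integrable P μ := integrable_of_bdd hPaesm hPbd
    obtain ⟨P', hP'sm, hPP'⟩ := exists_stronglyMeasurable_limit hmsup
      (fun n => (hZsm n).mono (h𝒢sup n)) hZten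
    have hPc_to : ∀ᵐ ω ∂μ, Tendsto (fun n => (μ[P|𝒢 n]) ω) atTop (𝓝 (P ω)) := by
      have hP'int : Integrable P' μ := hPint.congr hPP'
      have hlevy := hP'int.tendsto_ae_condExp hP'sm
      have hcongr : ∀ᵐ ω ∂μ, ∀ n, (μ[P|𝒢 n]) ω = (μ[P'|𝒢 n]) ω :=
        ae_all_iff.2 fun n => condExp_congr_ae hPP'
      filter_upwards [hlevy, hcongr, hPP'] with ω h1 h2 h3
      have := h1.congr fun n => (h2 n).symm
      rwa [← h3] at this
    have hPcbd : ∀ n, ∀ᵐ ω ∂μ, |(μ[P|𝒢 n]) ω| ≤ BG := fun n =>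
      ae_abs_condexp_le (𝒢.le n) hPaesm hPbd
    have habs_sub : ∀ a b : ℝ, |a - b| ≤ |a| + |b| := fun a b => by
      rw [sub_eq_add_neg]
      exact (abs_add_le a (-b)).trans_eq (by rw [abs_neg])
    -- key lemma applications
    have hkey1 := keyL 𝒢 (fun m ω => Z m ω - P ω) (BG + BG)
      (fun m => (hZaesm m).sub hPaesm)
      (fun m => by
        filter_upwards [hZbd m, hPbd] with ω h1 h2
        exact (habs_sub _ _).trans (add_le_add h1 h2))
      (by
        filter_upwards [hZten] with ω h
        simpa using h.sub (tendsto_const_nhds (x := P ω))) 1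
    have hkey2 := keyL 𝒢 (fun m ω => P ω - (μ[P|𝒢 m]) ω) (BG + BG)
      (fun m => hPaesm.sub (stronglyMeasurable_condExp.mono (𝒢.le m)).aestronglyMeasurable)
      (fun m => by
        filter_upwards [hPbd, hPcbd m] with ω h1 h2
        exact (habs_sub _ _).trans (add_le_add h1 h2))
      (by
        filter_upwards [hPc_to] with ω h
        simpa using (tendsto_const_nhds (x := P ω)).sub h) 0
    -- per-n integrabilities
    have hf0Xaesm : ∀ n, AEStronglyMeasurable (fun ω => f 0 (X (n + 1) ω)) μ := fun n =>
      ((hf 0).comp (hXmeas _ (by omega))).aestronglyMeasurable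
    have hf0Xint : ∀ n, Integrable (fun ω => f 0 (X (n + 1) ω)) μ := fun n =>
      integrable_of_bdd (hf0Xaesm n) (Eventually.of_forall fun ω => hfB 0 _)
    have ht1int : ∀ n,
        Integrable (fun x => f 0 (X (n + 1) x) * (Z (n + 1) x - P x)) μ := fun n =>
      integrable_of_bdd ((hf0Xaesm n).mul ((hZaesm (n + 1)).sub hPaesm))
        (by
          filter_upwards [hZbd (n + 1), hPbd] with ω h1 h2
          rw [abs_mul]
          exact mul_le_mul (hfB 0 _) ((habs_sub _ _).trans (add_le_add h1 h2))
            (abs_nonneg _) (hB0 0))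
    have ht2int : ∀ n,
        Integrable (fun x => f 0 (X (n + 1) x) * (P x - (μ[P|𝒢 n]) x)) μ := fun n =>
      integrable_of_bdd ((hf0Xaesm n).mul (hPaesm.sub
          (stronglyMeasurable_condExp.mono (𝒢.le n)).aestronglyMeasurable))
        (by
          filter_upwards [hPbd, hPcbd n] with ω h1 h2
          rw [abs_mul]
          exact mul_le_mul (hfB 0 _) ((habs_sub _ _).trans (add_le_add h1 h2))
            (abs_nonneg _) (hB0 0))
    have ht3int : ∀ n,
        Integrable (fun x => (μ[P|𝒢 n]) x * f 0 (X (n + 1) x)) μ := fun n =>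
      integrable_of_bdd (((stronglyMeasurable_condExp.mono
          (𝒢.le n)).aestronglyMeasurable).mul (hf0Xaesm n))
        (by
          filter_upwards [hPcbd n] with ω h1
          rw [abs_mul]
          exact mul_le_mul h1 (hfB 0 _) (abs_nonneg _) hBGnn)
    -- the tower-property identity
    have hsplit : ∀ n, prodF n = fun ω => f 0 (X (n + 1) ω) * prodG (n + 1) ω := by
      intro n
      funext ω
      simp only [hprodF, hprodG]
      have h0 : n + ((0 : Fin (k + 2)) : ℕ) + 1 = n + 1 := by simp
      rw [Fin.prod_univ_succ, h0]
      exact congrArg (fun t => f 0 (X (n + 1) ω) * t)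
        (Finset.prod_congr rfl fun j _ => by
          have he : n + ((Fin.succ j : Fin (k + 2)) : ℕ) + 1 = n + 1 + (j : ℕ) + 1 := by
            rw [Fin.val_succ]; ring
          rw [he])
    have hstep : ∀ n, (μ[prodF n|𝒢 n]) =ᵐ[μ]
        μ[(fun ω => f 0 (X (n + 1) ω) * Z (n + 1) ω)|𝒢 n] := by
      intro n
      have htower : μ[prodF n|𝒢 n] =ᵐ[μ] μ[μ[prodF n|𝒢 (n + 1)]|𝒢 n] :=
        (condExp_condExp_of_le (𝒢.mono (Nat.le_succ n)) (𝒢.le (n + 1))).symm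
      have hsm0 : StronglyMeasurable[𝒢 (n + 1)] (fun ω => f 0 (X (n + 1) ω)) :=
        ((hf 0).comp (hadp (n + 1) (by omega))).stronglyMeasurable
      have hmulint : Integrable ((fun ω => f 0 (X (n + 1) ω)) * prodG (n + 1)) μ :=
        integrable_of_bdd (((hf0Xaesm n)).mul (hprodGmeas (n + 1)).aestronglyMeasurable)
          (Eventually.of_forall fun ω => by
            have : |f 0 (X (n + 1) ω) * prodG (n + 1) ω| ≤ B 0 * BG := by
              rw [abs_mul]
              exact mul_le_mul (hfB 0 _) (hprodGbd (n + 1) ω) (abs_nonneg _) (hB0 0)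
            exact this)
      have hpull : μ[prodF n|𝒢 (n + 1)] =ᵐ[μ] fun ω => f 0 (X (n + 1) ω) * Z (n + 1) ω := by
        have h1 : prodF n = (fun ω => f 0 (X (n + 1) ω)) * prodG (n + 1) := by
          rw [hsplit n]; rfl
        rw [h1]
        exact condExp_mul_of_stronglyMeasurable_left hsm0 hmulint (hprodGint (n + 1))
      exact htower.trans (condExp_congr_ae hpull)
    -- decomposition
    have hiden : ∀ n, ∀ᵐ ω ∂μ, (μ[prodF n|𝒢 n]) ω
        = (μ[(fun x => f 0 (X (n + 1) x) * (Z (n + 1) x - P x))|𝒢 n]) ω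
          + (μ[(fun x => f 0 (X (n + 1) x) * (P x - (μ[P|𝒢 n]) x))|𝒢 n]) ω
          + (μ[P|𝒢 n]) ω * (μ[(fun ω' => f 0 (X (n + 1) ω'))|𝒢 n]) ω := by
      intro n
      have hfun : (fun ω => f 0 (X (n + 1) ω) * Z (n + 1) ω)
          = (fun x => f 0 (X (n + 1) x) * (Z (n + 1) x - P x))
            + ((fun x => f 0 (X (n + 1) x) * (P x - (μ[P|𝒢 n]) x))
              + fun x => (μ[P|𝒢 n]) x * f 0 (X (n + 1) x)) := by
        funext ω
        simp only [Pi.add_apply]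
        ring
      have hadd : μ[(fun ω => f 0 (X (n + 1) ω) * Z (n + 1) ω)|𝒢 n] =ᵐ[μ]
          μ[(fun x => f 0 (X (n + 1) x) * (Z (n + 1) x - P x))|𝒢 n]
          + (μ[(fun x => f 0 (X (n + 1) x) * (P x - (μ[P|𝒢 n]) x))|𝒢 n]
            + μ[(fun x => (μ[P|𝒢 n]) x * f 0 (X (n + 1) x))|𝒢 n]) := by
        rw [hfun]
        exact (condExp_add (ht1int n) ((ht2int n).add (ht3int n)) _).trans
          ((EventuallyEq.refl _ _).add (condExp_add (ht2int n) (ht3int n) _))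
      have hmul : μ[(fun x => (μ[P|𝒢 n]) x * f 0 (X (n + 1) x))|𝒢 n] =ᵐ[μ]
          (μ[P|𝒢 n]) * μ[(fun ω' => f 0 (X (n + 1) ω'))|𝒢 n] := by
        have := condExp_mul_of_stronglyMeasurable_left (m := (𝒢 n : MeasurableSpace Ω)) (μ := μ)
          (f := μ[P|𝒢 n]) (g := fun ω' => f 0 (X (n + 1) ω'))
          stronglyMeasurable_condExp (ht3int n) (hf0Xint n)
        exact this
      filter_upwards [hstep n, hadd, hmul] with ω h1 h2 h3
      rw [h1, h2]
      simp only [Pi.add_apply, Pi.mul_apply] at h3 ⊢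
      rw [h3]
      ring
    -- abs bounds on the two error terms
    have habsA : ∀ n, ∀ᵐ ω ∂μ,
        |(μ[(fun x => f 0 (X (n + 1) x) * (Z (n + 1) x - P x))|𝒢 n]) ω|
          ≤ B 0 * (μ[(fun x => |Z (n + 1) x - P x|)|𝒢 n]) ω := by
      intro n
      have hZPint : Integrable (fun x => |Z (n + 1) x - P x|) μ :=
        (integrable_condExp.sub hPint).abs
      have h1 := abs_condexp_le_condexp_abs (m := (𝒢 n : MeasurableSpace Ω)) (ht1int n)
      have h2 : μ[(fun x => |f 0 (X (n + 1) x) * (Z (n + 1) x - P x)|)|𝒢 n] ≤ᵐ[μ]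
          μ[(fun x => B 0 * |Z (n + 1) x - P x|)|𝒢 n] :=
        condExp_mono (ht1int n).abs (hZPint.const_mul _)
          (Eventually.of_forall fun x => by
            simp only [abs_mul]
            exact mul_le_mul_of_nonneg_right (hfB 0 _) (abs_nonneg _))
      have h3 : μ[(fun x => B 0 * |Z (n + 1) x - P x|)|𝒢 n] =ᵐ[μ]
          fun ω => B 0 * (μ[(fun x => |Z (n + 1) x - P x|)|𝒢 n]) ω := by
        have := condExp_smul (μ := μ) (m := (𝒢 n : MeasurableSpace Ω)) (B 0)
          (fun x => |Z (n + 1) x - P x|)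
        simpa [Pi.smul_def, smul_eq_mul] using this
      filter_upwards [h1, h2, h3] with ω a b c
      calc |(μ[(fun x => f 0 (X (n + 1) x) * (Z (n + 1) x - P x))|𝒢 n]) ω|
          ≤ (μ[(fun x => |f 0 (X (n + 1) x) * (Z (n + 1) x - P x)|)|𝒢 n]) ω := a
        _ ≤ (μ[(fun x => B 0 * |Z (n + 1) x - P x|)|𝒢 n]) ω := b
        _ = B 0 * (μ[(fun x => |Z (n + 1) x - P x|)|𝒢 n]) ω := c
    have habsB : ∀ n, ∀ᵐ ω ∂μ,
        |(μ[(fun x => f 0 (X (n + 1) x) * (P x - (μ[P|𝒢 n]) x))|𝒢 n]) ω|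
          ≤ B 0 * (μ[(fun x => |P x - (μ[P|𝒢 n]) x|)|𝒢 n]) ω := by
      intro n
      have hPPcint : Integrable (fun x => |P x - (μ[P|𝒢 n]) x|) μ :=
        (hPint.sub integrable_condExp).abs
      have h1 := abs_condexp_le_condexp_abs (m := (𝒢 n : MeasurableSpace Ω)) (ht2int n)
      have h2 : μ[(fun x => |f 0 (X (n + 1) x) * (P x - (μ[P|𝒢 n]) x)|)|𝒢 n] ≤ᵐ[μ]
          μ[(fun x => B 0 * |P x - (μ[P|𝒢 n]) x|)|𝒢 n] :=
        condExp_mono (ht2int n).abs (hPPcint.const_mul _)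
          (Eventually.of_forall fun x => by
            simp only [abs_mul]
            exact mul_le_mul_of_nonneg_right (hfB 0 _) (abs_nonneg _))
      have h3 : μ[(fun x => B 0 * |P x - (μ[P|𝒢 n]) x|)|𝒢 n] =ᵐ[μ]
          fun ω => B 0 * (μ[(fun x => |P x - (μ[P|𝒢 n]) x|)|𝒢 n]) ω := by
        have := condExp_smul (μ := μ) (m := (𝒢 n : MeasurableSpace Ω)) (B 0)
          (fun x => |P x - (μ[P|𝒢 n]) x|)
        simpa [Pi.smul_def, smul_eq_mul] using this
      filter_upwards [h1, h2, h3] with ω a b c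
      calc |(μ[(fun x => f 0 (X (n + 1) x) * (P x - (μ[P|𝒢 n]) x))|𝒢 n]) ω|
          ≤ (μ[(fun x => |f 0 (X (n + 1) x) * (P x - (μ[P|𝒢 n]) x)|)|𝒢 n]) ω := a
        _ ≤ (μ[(fun x => B 0 * |P x - (μ[P|𝒢 n]) x|)|𝒢 n]) ω := b
        _ = B 0 * (μ[(fun x => |P x - (μ[P|𝒢 n]) x|)|𝒢 n]) ω := c
    -- final assembly
    filter_upwards [hkey1, hkey2, hPc_to, hV 0, ae_all_iff.2 hiden, ae_all_iff.2 habsA,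
      ae_all_iff.2 habsB] with ω hk1 hk2 hpc hm0 hid ha hb
    rw [Fin.prod_univ_succ]
    have hAten : Tendsto (fun n =>
        (μ[(fun x => f 0 (X (n + 1) x) * (Z (n + 1) x - P x))|𝒢 n]) ω) atTop (𝓝 0) := by
      have hg : Tendsto (fun n =>
          B 0 * (μ[(fun x => |Z (n + 1) x - P x|)|𝒢 n]) ω) atTop (𝓝 0) := by
        simpa using hk1.const_mul (B 0)
      exact squeeze_zero_norm (fun n => (Real.norm_eq_abs _).le.trans ((Real.norm_eq_abs _) ▸ ha n)) hg
    have hBten : Tendsto (fun n =>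
        (μ[(fun x => f 0 (X (n + 1) x) * (P x - (μ[P|𝒢 n]) x))|𝒢 n]) ω) atTop (𝓝 0) := by
      have hg : Tendsto (fun n =>
          B 0 * (μ[(fun x => |P x - (μ[P|𝒢 n]) x|)|𝒢 n]) ω) atTop (𝓝 0) := by
        simpa using hk2.const_mul (B 0)
      exact squeeze_zero_norm (fun n => (Real.norm_eq_abs _).le.trans ((Real.norm_eq_abs _) ▸ hb n)) hg
    have hCten : Tendsto (fun n =>
        (μ[P|𝒢 n]) ω * (μ[(fun ω' => f 0 (X (n + 1) ω'))|𝒢 n]) ω) atTop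
        (𝓝 (P ω * V 0 ω)) := hpc.mul hm0
    have hsum := (hAten.add hBten).add hCten
    have hfinal : Tendsto (fun n => (μ[prodF n|𝒢 n]) ω) atTop (𝓝 (P ω * V 0 ω)) := by
      have := hsum.congr fun n => (hid n).symm
      simpa using this
    have : Tendsto (fun n => (μ[prodF n|𝒢 n]) ω) atTop
        (𝓝 (V 0 ω * ∏ j : Fin (k + 1), V (Fin.succ j) ω)) := by
      rw [mul_comm] at hfinal
      exact hfinal
    exact this

end Stmt8Helpers

/-- If `(X n)` is `𝒢`-c.i.d. and `f 0, …, f (k-1)` are bounded measurable (`k > 1`), then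
`E[∏_j f j (X (n + j + 1)) | 𝒢 n] → ∏_j V (f j)` a.s. and in `L¹`, where `V (f j)` is the
a.s. limit of the martingale `E[f j (X (n+1)) | 𝒢 n]`. -/
theorem stmt8 {Ω E : Type*} {mΩ : MeasurableSpace Ω} [MeasurableSpace E]
    (μ : Measure Ω) [IsProbabilityMeasure μ] (𝒢 : Filtration ℕ mΩ) (X : ℕ → Ω → E)
    (hadp : ∀ n, 1 ≤ n → Measurable[𝒢 n] (X n))
    (hcid : IsCID μ 𝒢 X)
    (k : ℕ) (hk : 1 < k) (f : Fin k → E → ℝ)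
    (hf : ∀ j, Measurable (f j)) (hbd : ∀ j, ∃ C, ∀ x, |f j x| ≤ C)
    (V : Fin k → Ω → ℝ)
    (hV : ∀ j, ∀ᵐ ω ∂μ, Tendsto (fun n => (μ[(fun ω' => f j (X (n + 1) ω')) | 𝒢 n]) ω)
      atTop (nhds (V j ω))) :
    (∀ᵐ ω ∂μ,
      Tendsto (fun n => (μ[(fun ω' => ∏ j, f j (X (n + (j : ℕ) + 1) ω')) | 𝒢 n]) ω)
        atTop (nhds (∏ j, V j ω))) ∧
    Tendsto (fun n =>
        ∫ ω, |(μ[(fun ω' => ∏ j, f j (X (n + (j : ℕ) + 1) ω')) | 𝒢 n]) ω - ∏ j, V j ω| ∂μ)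
      atTop (nhds 0) := by
  obtain ⟨m, rfl⟩ : ∃ m, k = m + 1 := ⟨k - 1, by omega⟩
  have hae := Stmt8Helpers.main_ind (μ := μ) 𝒢 X hadp m f hf hbd V hV
  refine ⟨hae, ?_⟩
  classical
  choose C hC using hbd
  set B : Fin (m + 1) → ℝ := fun j => max (C j) 0 with hB
  have hfB : ∀ j x, |f j x| ≤ B j := fun j x => (hC j x).trans (le_max_left _ _)
  have hB0 : ∀ j, 0 ≤ B j := fun j => le_max_right _ _
  have hXmeas : ∀ n, 1 ≤ n → Measurable (X n) := fun n hn => (hadp n hn).mono (𝒢.le n) le_rfl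
  have hprodmeas : ∀ n, Measurable (fun ω => ∏ j, f j (X (n + (j : ℕ) + 1) ω)) := fun n =>
    Finset.measurable_prod _ fun j _ => (hf j).comp (hXmeas _ (by omega))
  have hprodbd : ∀ n ω, |∏ j, f j (X (n + (j : ℕ) + 1) ω)| ≤ ∏ j, B j := fun n ω => by
    rw [Finset.abs_prod]
    exact Finset.prod_le_prod (fun j _ => abs_nonneg _) fun j _ => hfB j _
  have hWbd : ∀ n, ∀ᵐ ω ∂μ,
      |(μ[(fun ω' => ∏ j, f j (X (n + (j : ℕ) + 1) ω'))|𝒢 n]) ω| ≤ ∏ j, B j :=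
    fun n => Stmt8Helpers.ae_abs_condexp_le (𝒢.le n) (hprodmeas n).aestronglyMeasurable
      (Eventually.of_forall (hprodbd n))
  have hVaesm : ∀ j, AEStronglyMeasurable (V j) μ := fun j =>
    aestronglyMeasurable_of_tendsto_ae atTop
      (fun n => (stronglyMeasurable_condExp.mono (𝒢.le n)).aestronglyMeasurable) (hV j)
  have hVbd : ∀ j, ∀ᵐ ω ∂μ, |V j ω| ≤ B j := fun j => by
    have hMbd : ∀ᵐ ω ∂μ, ∀ n, |(μ[(fun ω' => f j (X (n + 1) ω'))|𝒢 n]) ω| ≤ B j :=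
      ae_all_iff.2 fun n => Stmt8Helpers.ae_abs_condexp_le (𝒢.le n)
        (((hf j).comp (hXmeas _ (by omega))).aestronglyMeasurable)
        (Eventually.of_forall fun ω => hfB j _)
    filter_upwards [hMbd, hV j] with ω h1 h2
    exact le_of_tendsto h2.abs (Eventually.of_forall h1)
  have hPaesm : AEStronglyMeasurable (fun ω => ∏ j, V j ω) μ :=
    Finset.aestronglyMeasurable_fun_prod _ fun j _ => hVaesm j
  have hPbd : ∀ᵐ ω ∂μ, |∏ j, V j ω| ≤ ∏ j, B j := by
    filter_upwards [ae_all_iff.2 hVbd] with ω h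
    rw [Finset.abs_prod]
    exact Finset.prod_le_prod (fun j _ => abs_nonneg _) fun j _ => h j
  have h0 : (0 : ℝ) = ∫ _ : Ω, (0 : ℝ) ∂μ := by simp
  rw [h0]
  refine tendsto_integral_of_dominated_convergence (fun _ => ∏ j, B j + ∏ j, B j)
    (fun n => ?_) (integrable_const _) (fun n => ?_) ?_
  · have hsm : AEStronglyMeasurable
        (μ[(fun ω' => ∏ j, f j (X (n + (j : ℕ) + 1) ω'))|𝒢 n]) μ :=
      (stronglyMeasurable_condExp.mono (𝒢.le n)).aestronglyMeasurable
    have := (hsm.sub hPaesm).norm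
    simpa [Real.norm_eq_abs] using this
  · filter_upwards [hWbd n, hPbd] with ω h1 h2
    rw [Real.norm_eq_abs, abs_abs]
    calc |(μ[(fun ω' => ∏ j, f j (X (n + (j : ℕ) + 1) ω'))|𝒢 n]) ω - ∏ j, V j ω|
        ≤ |(μ[(fun ω' => ∏ j, f j (X (n + (j : ℕ) + 1) ω'))|𝒢 n]) ω| + |∏ j, V j ω| := by
          rw [sub_eq_add_neg]
          exact (abs_add_le _ _).trans_eq (by rw [abs_neg])
      _ ≤ ∏ j, B j + ∏ j, B j := add_le_add h1 h2
  · filter_upwards [hae] with ω h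
    have := h.sub (tendsto_const_nhds (x := ∏ j, V j ω))
    simpa using this.abs
end

section
/- A sequence (X_n) is exchangeable if and only if for every finite permutation τ of {1, 2, ...}, the permuted sequence (X_{τ(n)})_n is c.i.d. -/
open MeasureTheory Filter

/-- `(X n)` (indexed from 1) is exchangeable: its finite-dimensional distributions are
invariant under permutations. -/
def IsExchangeable {Ω E : Type*} {mΩ : MeasurableSpace Ω} [MeasurableSpace E]
    (μ : Measure Ω) (X : ℕ → Ω → E) : Prop :=
  ∀ (n : ℕ) (σ : Equiv.Perm (Fin n)),
    Measure.map (fun ω (i : Fin n) => X ((σ i : ℕ) + 1) ω) μ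
      = Measure.map (fun ω (i : Fin n) => X ((i : ℕ) + 1) ω) μ

lemma exists_perm_extend (k : ℕ) (g : Fin k → ℕ) (hg : Function.Injective g)
    (h0 : ∀ i, g i ≠ 0) :
    ∃ τ : Equiv.Perm ℕ, τ 0 = 0 ∧ {n : ℕ | τ n ≠ n}.Finite ∧
      ∀ i : Fin k, τ ((i : ℕ) + 1) = g i := by
  induction k with
  | zero => exact ⟨1, rfl, by simp, fun i => i.elim0⟩
  | succ k ih =>
    obtain ⟨τ', h0', hfin', hval'⟩ := ih (g ∘ Fin.castSucc)
      (hg.comp (Fin.castSucc_injective k)) (fun i => h0 _)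
    set a := τ'.symm (g (Fin.last k)) with ha
    refine ⟨τ' * Equiv.swap a (k + 1), ?_, ?_, ?_⟩
    · have hane : a ≠ 0 := by
        intro h
        apply h0 (Fin.last k)
        have : τ' a = g (Fin.last k) := by simp [ha]
        rw [h, h0'] at this
        exact this.symm
      rw [Equiv.Perm.mul_apply, Equiv.swap_apply_of_ne_of_ne (Ne.symm hane) (by omega : (0:ℕ) ≠ k+1), h0']
    · apply Set.Finite.subset (hfin'.union (Set.finite_Icc 0 (max a (k+1))))
      intro n hn
      by_cases h1 : Equiv.swap a (k+1) n = n
      · left; simpa [Equiv.Perm.mul_apply, h1] using hn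
      · right
        have : n = a ∨ n = k + 1 := by
          by_contra hc
          push_neg at hc
          exact h1 (Equiv.swap_apply_of_ne_of_ne hc.1 hc.2)
        simp only [Set.mem_Icc]
        omega
    · intro i
      rcases Fin.eq_castSucc_or_eq_last i with ⟨j, rfl⟩ | rfl
      · have h1 : ((Fin.castSucc j : Fin (k+1)) : ℕ) + 1 ≠ k + 1 := by
          have := j.isLt; simp; omega
        have h2 : ((Fin.castSucc j : Fin (k+1)) : ℕ) + 1 ≠ a := by
          intro h
          have : τ' ((j : ℕ) + 1) = g (Fin.last k) := by
            rw [show ((j:ℕ)+1) = a by simpa using h, ha]; simp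
          rw [hval' j] at this
          have := hg this
          exact absurd (congrArg Fin.val this) (by simp; omega)
        simp only [Equiv.Perm.mul_apply, Equiv.swap_apply_of_ne_of_ne h2 h1]
        simpa using hval' j
      · simp [Equiv.Perm.mul_apply, ha]

section Aux
variable {Ω E : Type*} {mΩ : MeasurableSpace Ω} [MeasurableSpace E]
    (μ : Measure Ω) (X : ℕ → Ω → E)


lemma meas_tuple (hX : ∀ n, Measurable (X n)) {n : ℕ} (v : Fin n → ℕ) :
    Measurable (fun ω (i : Fin n) => X (v i) ω) :=
  measurable_pi_lambda _ (fun i => hX (v i))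

lemma law_comp_perm (hX : ∀ n, Measurable (X n)) {n : ℕ} (v : Fin n → ℕ) (π : Equiv.Perm (Fin n)) :
    Measure.map (fun ω (i : Fin n) => X ((v ∘ π) i) ω) μ
      = Measure.map (fun f : Fin n → E => f ∘ π)
          (Measure.map (fun ω (i : Fin n) => X (v i) ω) μ) :=
  (Measure.map_map (measurable_pi_lambda _ (fun i => measurable_pi_apply (π i)))
    (meas_tuple X hX v)).symm

lemma law_perm_congr (hX : ∀ n, Measurable (X n)) {n : ℕ} (v w : Fin n → ℕ) (π : Equiv.Perm (Fin n))
    (h : Measure.map (fun ω (i : Fin n) => X (v i) ω) μ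
      = Measure.map (fun ω (i : Fin n) => X (w i) ω) μ) :
    Measure.map (fun ω (i : Fin n) => X ((v ∘ π) i) ω) μ
      = Measure.map (fun ω (i : Fin n) => X ((w ∘ π) i) ω) μ := by
  rw [law_comp_perm μ X hX v π, law_comp_perm μ X hX w π, h]


lemma law_update_last
    (h : ∀ τ : Equiv.Perm ℕ, τ 0 = 0 → {n : ℕ | τ n ≠ n}.Finite →
      IsCIDnat μ (fun n ω => X (τ n) ω))
    {m : ℕ} (v : Fin (m + 1) → ℕ) (hv : Function.Injective v) (hv0 : ∀ i, v i ≠ 0)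
    (b : ℕ) (hb0 : b ≠ 0) (hb : b ∉ Set.range v) :
    Measure.map (fun ω (i : Fin (m + 1)) => X (Function.update v (Fin.last m) b i) ω) μ
      = Measure.map (fun ω (i : Fin (m + 1)) => X (v i) ω) μ := by
  set g : Fin (m + 2) → ℕ := Fin.snoc v b with hgdef
  have hgc : ∀ i : Fin (m + 1), g (Fin.castSucc i) = v i := fun i => by simp [hgdef]
  have hgl : g (Fin.last (m + 1)) = b := by simp [hgdef]
  have hg : Function.Injective g := by
    intro i j hij
    rcases Fin.eq_castSucc_or_eq_last i with ⟨i', rfl⟩ | rfl <;>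
      rcases Fin.eq_castSucc_or_eq_last j with ⟨j', rfl⟩ | rfl
    · exact congrArg Fin.castSucc (hv (by rwa [hgc, hgc] at hij))
    · exact absurd ⟨i', by rw [← hgc i', hij, hgl]⟩ hb
    · exact absurd ⟨j', by rw [← hgc j', ← hij, hgl]⟩ hb
    · rfl
  have hg0 : ∀ i, g i ≠ 0 := by
    intro i
    rcases Fin.eq_castSucc_or_eq_last i with ⟨i', rfl⟩ | rfl
    · rw [hgc]; exact hv0 i'
    · rw [hgl]; exact hb0
  obtain ⟨τ, hτ0, hτfin, hτv⟩ := exists_perm_extend (m + 2) g hg hg0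
  have hcid := h τ hτ0 hτfin m
  have hv' : ∀ i : Fin (m + 1), τ ((i : ℕ) + 1) = v i := by
    intro i
    have := hτv (Fin.castSucc i)
    rwa [Fin.coe_castSucc, hgc] at this
  have hb' : τ (m + 2) = b := by
    have := hτv (Fin.last (m + 1))
    rwa [Fin.val_last, hgl] at this
  have e1 : (fun ω (i : Fin (m + 1)) =>
      if (i : ℕ) < m then X (τ ((i : ℕ) + 1)) ω else X (τ (m + 2)) ω)
      = fun ω i => X (Function.update v (Fin.last m) b i) ω := by
    funext ω i
    by_cases hi : (i : ℕ) < m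
    · rw [if_pos hi, Function.update_of_ne (Fin.ne_of_val_ne (by simp [Fin.val_last]; omega)), hv' i]
    · have : i = Fin.last m := Fin.ext (by have := i.isLt; simp [Fin.val_last]; omega)
      rw [if_neg hi, this, Function.update_self, hb']
  have e2 : (fun ω (i : Fin (m + 1)) => X (τ ((i : ℕ) + 1)) ω)
      = fun ω i => X (v i) ω := by
    funext ω i; rw [hv' i]
  calc Measure.map (fun ω (i : Fin (m + 1)) => X (Function.update v (Fin.last m) b i) ω) μ
      = Measure.map (fun ω (i : Fin (m + 1)) =>
          if (i : ℕ) < m then X (τ ((i : ℕ) + 1)) ω else X (τ (m + 2)) ω) μ := by rw [e1]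
    _ = Measure.map (fun ω (i : Fin (m + 1)) => X (τ ((i : ℕ) + 1)) ω) μ := hcid
    _ = Measure.map (fun ω (i : Fin (m + 1)) => X (v i) ω) μ := by rw [e2]

lemma law_update_any
    (hX : ∀ n, Measurable (X n))
    (h : ∀ τ : Equiv.Perm ℕ, τ 0 = 0 → {n : ℕ | τ n ≠ n}.Finite →
      IsCIDnat μ (fun n ω => X (τ n) ω))
    {m : ℕ} (v : Fin (m + 1) → ℕ) (hv : Function.Injective v) (hv0 : ∀ i, v i ≠ 0)
    (b : ℕ) (hb0 : b ≠ 0) (hb : b ∉ Set.range v) (j : Fin (m + 1)) :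
    Measure.map (fun ω (i : Fin (m + 1)) => X (Function.update v j b i) ω) μ
      = Measure.map (fun ω (i : Fin (m + 1)) => X (v i) ω) μ := by
  set π : Equiv.Perm (Fin (m + 1)) := Equiv.swap j (Fin.last m) with hπ
  have hrange : b ∉ Set.range (v ∘ π) := by
    rintro ⟨i, hi⟩; exact hb ⟨π i, hi⟩
  have key := law_update_last μ X h (v ∘ π) (hv.comp π.injective)
    (fun i => hv0 _) b hb0 hrange
  have e : Function.update (v ∘ π) (Fin.last m) b = (Function.update v j b) ∘ π := by
    funext i
    by_cases hi : i = Fin.last m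
    · subst hi
      rw [Function.update_self, Function.comp_apply, hπ, Equiv.swap_apply_right,
        Function.update_self]
    · have h2 : π i ≠ j := by
        intro hc
        apply hi
        exact π.injective (by rw [hc, hπ, Equiv.swap_apply_right])
      simp only [Function.comp_apply, Function.update_of_ne hi, Function.update_of_ne h2]
  rw [e] at key
  have key2 := law_perm_congr μ X hX ((Function.update v j b) ∘ π) (v ∘ π) π key
  have eπ : ∀ (w : Fin (m+1) → ℕ), (w ∘ π) ∘ π = w := by
    intro w; funext i
    simp [hπ, Function.comp_apply, Equiv.swap_apply_self]
  rwa [eπ, eπ] at key2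

lemma law_chain
    (hX : ∀ n, Measurable (X n))
    (h : ∀ τ : Equiv.Perm ℕ, τ 0 = 0 → {n : ℕ | τ n ≠ n}.Finite →
      IsCIDnat μ (fun n ω => X (τ n) ω))
    {m : ℕ} (v u : Fin (m + 1) → ℕ)
    (hv : Function.Injective v) (hv0 : ∀ i, v i ≠ 0)
    (hu : Function.Injective u) (hu0 : ∀ i, u i ≠ 0)
    (hdisj : ∀ i j, u i ≠ v j) :
    Measure.map (fun ω (i : Fin (m + 1)) => X (v i) ω) μ
      = Measure.map (fun ω (i : Fin (m + 1)) => X (u i) ω) μ := by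
  set t : ℕ → Fin (m + 1) → ℕ := fun k i => if (i : ℕ) < k then u i else v i with ht
  have ht_inj : ∀ k, Function.Injective (t k) := by
    intro k i j hij
    simp only [ht] at hij
    by_cases hi : (i : ℕ) < k <;> by_cases hj : (j : ℕ) < k
    · rw [if_pos hi, if_pos hj] at hij; exact hu hij
    · rw [if_pos hi, if_neg hj] at hij; exact absurd hij (hdisj i j)
    · rw [if_neg hi, if_pos hj] at hij; exact absurd hij.symm (hdisj j i)
    · rw [if_neg hi, if_neg hj] at hij; exact hv hij
  have ht0 : ∀ k i, t k i ≠ 0 := by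
    intro k i
    simp only [ht]
    by_cases hi : (i : ℕ) < k
    · rw [if_pos hi]; exact hu0 i
    · rw [if_neg hi]; exact hv0 i
  have main : ∀ k, k ≤ m + 1 →
      Measure.map (fun ω (i : Fin (m + 1)) => X (t k i) ω) μ
        = Measure.map (fun ω (i : Fin (m + 1)) => X (v i) ω) μ := by
    intro k
    induction k with
    | zero =>
      intro _
      have : t 0 = v := by funext i; simp [ht]
      rw [this]
    | succ k ihk =>
      intro hk1
      have hk : k < m + 1 := by omega
      set jk : Fin (m + 1) := ⟨k, hk⟩ with hjk
      have hupd : t (k + 1) = Function.update (t k) jk (u jk) := by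
        funext i
        by_cases hi : i = jk
        · subst hi
          rw [Function.update_self]
          simp only [ht, hjk]
          rw [if_pos (by omega)]
        · rw [Function.update_of_ne hi]
          have hikval : (i : ℕ) ≠ k := fun hc => hi (Fin.ext (by simp [hjk, hc]))
          simp only [ht]
          by_cases h2 : (i : ℕ) < k
          · rw [if_pos (by omega), if_pos h2]
          · rw [if_neg (by omega), if_neg h2]
      have hbr : u jk ∉ Set.range (t k) := by
        rintro ⟨i, hi⟩
        simp only [ht] at hi
        by_cases h2 : (i : ℕ) < k
        · rw [if_pos h2] at hi
          have := hu hi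
          rw [this] at h2
          simp [hjk] at h2
        · rw [if_neg h2] at hi
          exact hdisj jk i hi.symm
      have := law_update_any μ X hX h (t k) (ht_inj k) (ht0 k) (u jk) (hu0 jk) hbr jk
      rw [← hupd] at this
      rw [this]
      exact ihk (by omega)
  have hend : t (m + 1) = u := by
    funext i; simp only [ht]; rw [if_pos i.isLt]
  have := main (m + 1) le_rfl
  rw [hend] at this
  exact this.symm

lemma law_inj_eq
    (hX : ∀ n, Measurable (X n))
    (h : ∀ τ : Equiv.Perm ℕ, τ 0 = 0 → {n : ℕ | τ n ≠ n}.Finite →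
      IsCIDnat μ (fun n ω => X (τ n) ω))
    {m : ℕ} (v w : Fin (m + 1) → ℕ)
    (hv : Function.Injective v) (hv0 : ∀ i, v i ≠ 0)
    (hw : Function.Injective w) (hw0 : ∀ i, w i ≠ 0) :
    Measure.map (fun ω (i : Fin (m + 1)) => X (v i) ω) μ
      = Measure.map (fun ω (i : Fin (m + 1)) => X (w i) ω) μ := by
  set M : ℕ := (Finset.univ.sup v) ⊔ (Finset.univ.sup w) with hM
  set u : Fin (m + 1) → ℕ := fun i => M + 1 + (i : ℕ) with hu
  have hu_inj : Function.Injective u := by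
    intro i j hij
    simp only [hu] at hij
    exact Fin.ext (by omega)
  have hu0 : ∀ i, u i ≠ 0 := fun i => by simp only [hu]; omega
  have hvM : ∀ j, v j ≤ M := fun j =>
    le_trans (Finset.le_sup (Finset.mem_univ j)) le_sup_left
  have hwM : ∀ j, w j ≤ M := fun j =>
    le_trans (Finset.le_sup (Finset.mem_univ j)) le_sup_right
  have h1 := law_chain μ X hX h v u hv hv0 hu_inj hu0
    (fun i j => by have := hvM j; simp only [hu]; omega)
  have h2 := law_chain μ X hX h w u hw hw0 hu_inj hu0
    (fun i j => by have := hwM j; simp only [hu]; omega)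
  rw [h1, h2]

lemma law_exch_eq
    (hX : ∀ n, Measurable (X n))
    (hexch : ∀ (N : ℕ) (σ : Equiv.Perm (Fin N)),
      Measure.map (fun ω (i : Fin N) => X ((σ i : ℕ) + 1) ω) μ
        = Measure.map (fun ω (i : Fin N) => X ((i : ℕ) + 1) ω) μ)
    {n : ℕ} (v : Fin n → ℕ) (hv : Function.Injective v) (hv0 : ∀ i, v i ≠ 0) :
    Measure.map (fun ω (i : Fin n) => X (v i) ω) μ
      = Measure.map (fun ω (i : Fin n) => X ((i : ℕ) + 1) ω) μ := by
  obtain ⟨τ, hτ0, hτfin, hτv⟩ := exists_perm_extend n v hv hv0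
  set B : ℕ := hτfin.toFinset.sup id with hB
  set N : ℕ := max n B with hN
  have hnN : n ≤ N := le_max_left _ _
  have hfix : ∀ k, N < k → τ k = k := by
    intro k hk
    by_contra hc
    have : k ∈ hτfin.toFinset := by simpa using hc
    have : k ≤ B := Finset.le_sup (f := id) this
    omega
  have hfix' : ∀ k, N < k → τ.symm k = k := by
    intro k hk
    have := hfix k hk
    conv_lhs => rw [← this]
    exact τ.symm_apply_apply k
  have hτ0' : τ.symm 0 = 0 := by
    conv_lhs => rw [← hτ0]; exact τ.symm_apply_apply 0
  have hbound : ∀ k, 1 ≤ k → k ≤ N → 1 ≤ τ k ∧ τ k ≤ N := by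
    intro k h1k hkN
    constructor
    · rcases Nat.eq_zero_or_pos (τ k) with h0 | h0
      · exfalso
        have : k = 0 := by
          have : τ k = τ 0 := by rw [h0, hτ0]
          exact τ.injective this
        omega
      · omega
    · by_contra hc
      push_neg at hc
      have := hfix (τ k) hc
      have : τ k = k := τ.injective (by rw [this])
      omega
  have hbound' : ∀ k, 1 ≤ k → k ≤ N → 1 ≤ τ.symm k ∧ τ.symm k ≤ N := by
    intro k h1k hkN
    constructor
    · rcases Nat.eq_zero_or_pos (τ.symm k) with h0 | h0
      · exfalso
        have : k = 0 := by
          have : τ.symm k = τ.symm 0 := by rw [h0, hτ0']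
          exact τ.symm.injective this
        omega
      · omega
    · by_contra hc
      push_neg at hc
      have := hfix' (τ.symm k) hc
      have : τ.symm k = k := τ.symm.injective (by rw [this])
      omega
  have hb1 : ∀ i : Fin N, 1 ≤ τ ((i : ℕ) + 1) ∧ τ ((i : ℕ) + 1) ≤ N :=
    fun i => hbound _ (by omega) (by have := i.isLt; omega)
  have hb2 : ∀ i : Fin N, 1 ≤ τ.symm ((i : ℕ) + 1) ∧ τ.symm ((i : ℕ) + 1) ≤ N :=
    fun i => hbound' _ (by omega) (by have := i.isLt; omega)
  set σ : Equiv.Perm (Fin N) :=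
    { toFun := fun i => ⟨τ ((i : ℕ) + 1) - 1, by have := hb1 i; omega⟩
      invFun := fun i => ⟨τ.symm ((i : ℕ) + 1) - 1, by have := hb2 i; omega⟩
      left_inv := by
        intro i
        apply Fin.ext
        simp only
        have h1 := hb1 i
        rw [show τ ((i : ℕ) + 1) - 1 + 1 = τ ((i : ℕ) + 1) by omega, τ.symm_apply_apply]
        omega
      right_inv := by
        intro i
        apply Fin.ext
        simp only
        have h2 := hb2 i
        rw [show τ.symm ((i : ℕ) + 1) - 1 + 1 = τ.symm ((i : ℕ) + 1) by omega, τ.apply_symm_apply]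
        omega } with hσ
  have hσval : ∀ i : Fin N, (σ i : ℕ) + 1 = τ ((i : ℕ) + 1) := by
    intro i
    have := hb1 i
    simp only [hσ, Equiv.coe_fn_mk]
    omega
  have hbig := hexch N σ
  set g : (Fin N → E) → (Fin n → E) := fun f i => f (Fin.castLE hnN i) with hg
  have hgm : Measurable g :=
    measurable_pi_lambda _ (fun i => measurable_pi_apply _)
  have h1 := congrArg (Measure.map g) hbig
  rw [Measure.map_map hgm (meas_tuple X hX (fun i : Fin N => (σ i : ℕ) + 1)),
    Measure.map_map hgm (meas_tuple X hX (fun i : Fin N => (i : ℕ) + 1))] at h1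
  have e1 : (g ∘ fun ω (i : Fin N) => X ((σ i : ℕ) + 1) ω)
      = fun ω (i : Fin n) => X (v i) ω := by
    funext ω i
    simp only [hg, Function.comp_apply]
    rw [hσval, show ((Fin.castLE hnN i : Fin N) : ℕ) = (i : ℕ) from rfl, hτv i]
  have e2 : (g ∘ fun ω (i : Fin N) => X ((i : ℕ) + 1) ω)
      = fun ω (i : Fin n) => X ((i : ℕ) + 1) ω := by
    funext ω i
    rfl
  rwa [e1, e2] at h1
end Aux

theorem stmt15_aux {Ω E : Type*} {mΩ : MeasurableSpace Ω} [MeasurableSpace E]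
    (μ : Measure Ω) [IsProbabilityMeasure μ] (X : ℕ → Ω → E)
    (hX : ∀ n, Measurable (X n)) :
    (∀ (n : ℕ) (σ : Equiv.Perm (Fin n)),
      Measure.map (fun ω (i : Fin n) => X ((σ i : ℕ) + 1) ω) μ
        = Measure.map (fun ω (i : Fin n) => X ((i : ℕ) + 1) ω) μ) ↔
      ∀ τ : Equiv.Perm ℕ, τ 0 = 0 → {n : ℕ | τ n ≠ n}.Finite →
        IsCIDnat μ (fun n ω => X (τ n) ω) := by
  constructor
  · intro hexch τ hτ0 hτfin n
    set vL : Fin (n + 1) → ℕ := fun i => if (i : ℕ) < n then τ ((i : ℕ) + 1) else τ (n + 2)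
      with hvL
    set vR : Fin (n + 1) → ℕ := fun i => τ ((i : ℕ) + 1) with hvR
    have hτinj : Function.Injective τ := τ.injective
    have hτpos : ∀ k, k ≠ 0 → τ k ≠ 0 := by
      intro k hk hc
      exact hk (hτinj (by rw [hc, hτ0]))
    have hvLinj : Function.Injective vL := by
      intro i j hij
      simp only [hvL] at hij
      apply Fin.ext
      by_cases hi : (i : ℕ) < n <;> by_cases hj : (j : ℕ) < n
      · rw [if_pos hi, if_pos hj] at hij; have := hτinj hij; omega
      · rw [if_pos hi, if_neg hj] at hij; have := hτinj hij; omega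
      · rw [if_neg hi, if_pos hj] at hij; have := hτinj hij; omega
      · have := i.isLt; have := j.isLt; omega
    have hvL0 : ∀ i, vL i ≠ 0 := by
      intro i
      simp only [hvL]
      by_cases hi : (i : ℕ) < n
      · rw [if_pos hi]; exact hτpos _ (by omega)
      · rw [if_neg hi]; exact hτpos _ (by omega)
    have hvRinj : Function.Injective vR := by
      intro i j hij
      simp only [hvR] at hij
      have := hτinj hij
      exact Fin.ext (by omega)
    have hvR0 : ∀ i, vR i ≠ 0 := fun i => hτpos _ (by omega)
    have e1 : (fun ω (i : Fin (n + 1)) =>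
        if (i : ℕ) < n then X (τ ((i : ℕ) + 1)) ω else X (τ (n + 2)) ω)
        = fun ω i => X (vL i) ω := by
      funext ω i
      simp only [hvL]
      by_cases hi : (i : ℕ) < n
      · rw [if_pos hi, if_pos hi]
      · rw [if_neg hi, if_neg hi]
    show Measure.map (fun ω (i : Fin (n + 1)) =>
        if (i : ℕ) < n then X (τ ((i : ℕ) + 1)) ω else X (τ (n + 2)) ω) μ
      = Measure.map (fun ω (i : Fin (n + 1)) => X (vR i) ω) μ
    rw [e1, law_exch_eq μ X hX hexch vL hvLinj hvL0,
      law_exch_eq μ X hX hexch vR hvRinj hvR0]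
  · intro h n σ
    cases n with
    | zero =>
      have e : (fun ω (i : Fin 0) => X ((σ i : ℕ) + 1) ω)
          = fun ω (i : Fin 0) => X ((i : ℕ) + 1) ω := by
        funext ω i; exact i.elim0
      rw [e]
    | succ m =>
      apply law_inj_eq μ X hX h
      · intro i j hij
        simp only at hij
        exact σ.injective (Fin.ext (by omega))
      · intro i; omega
      · intro i j hij
        simp only at hij
        exact Fin.ext (by omega)
      · intro i; omega

/-- `(X n)` is exchangeable if and only if `(X (τ n))` is c.i.d. for every finite
permutation `τ` of `{1, 2, …}` (i.e. every permutation of `ℕ` fixing `0` and all but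
finitely many indices). -/
theorem stmt15 {Ω E : Type*} {mΩ : MeasurableSpace Ω} [MeasurableSpace E]
    (μ : Measure Ω) [IsProbabilityMeasure μ] (X : ℕ → Ω → E)
    (hX : ∀ n, Measurable (X n)) :
    IsExchangeable μ X ↔
      ∀ τ : Equiv.Perm ℕ, τ 0 = 0 → {n : ℕ | τ n ≠ n}.Finite →
        IsCIDnat μ (fun n ω => X (τ n) ω) :=
  stmt15_aux μ X hX
end
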